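/- arXiv:2103.04358 — 6 statements merged into one kernel-verified Lean document; each statement's English description precedes it below -/
import Mathlib

section
/- For every real s ≤ 3/2 there is a constant C_s > 0 (depending only on s) such that for all a ∈ ℝ and all (I,J,K) ∈ ℤ³ with a ≠ 0 or (I,J,K) ≠ (0,0,0), one has |E_{I,J,K}(f_{a,s})| ≤ C_s (a² + I² + J² + K²)^{s - 3/2}. -/
open scoped BigOperators

private lemma hd_aux (c0 B e : ℝ) {t : ℝ} (h : 0 < B + t ^ 2) :
    HasDerivAt (fun u : ℝ => c0 * (B + u ^ 2) ^ e) (2 * c0 * e * t * (B + t ^ 2) ^ (e - 1)) t := by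
  have h1 : HasDerivAt (fun u : ℝ => B + u ^ 2) (2 * t) t := by
    simpa using (hasDerivAt_pow 2 t).const_add B
  have h2 := (Real.hasDerivAt_rpow_const (x := B + t ^ 2) (p := e) (Or.inl h.ne')).comp t h1
  have h4 : HasDerivAt (fun u : ℝ => c0 * (B + u ^ 2) ^ e)
      (c0 * (e * (B + t ^ 2) ^ (e - 1) * (2 * t))) t := by
    simpa [Function.comp] using h2.const_mul c0
  convert h4 using 1
  ring

private lemma cont_aux (k B e : ℝ) {a b : ℝ} (h : ∀ t ∈ Set.uIcc a b, 0 < B + t ^ 2) :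
    IntervalIntegrable (fun t => k * t * (B + t ^ 2) ^ e) MeasureTheory.volume a b := by
  apply ContinuousOn.intervalIntegrable
  intro t ht
  have h1 : ContinuousAt (fun t : ℝ => (B + t ^ 2) ^ e) t := by
    have hb : ContinuousAt (fun t : ℝ => B + t ^ 2) t := by fun_prop
    exact hb.rpow_const (Or.inl (h t ht).ne')
  exact ((continuousAt_const.mul continuousAt_id).mul h1).continuousWithinAt

private lemma ftc_aux (c0 B e a : ℝ) (h : ∀ t ∈ Set.uIcc a (a + 1), 0 < B + t ^ 2) :
    c0 * (B + (a + 1) ^ 2) ^ e - c0 * (B + a ^ 2) ^ e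
      = ∫ t in a..(a + 1), 2 * c0 * e * t * (B + t ^ 2) ^ (e - 1) := by
  symm
  exact intervalIntegral.integral_eq_sub_of_hasDerivAt
    (fun t ht => hd_aux c0 B e (h t ht)) (cont_aux (2 * c0 * e) B (e - 1) h)

private lemma sq_cast_le {n : ℤ} {x : ℝ} (hx : x ∈ Set.uIcc (2 * (n : ℝ)) (2 * (n : ℝ) + 1)) :
    (n : ℝ) ^ 2 ≤ x ^ 2 := by
  rw [Set.uIcc_of_le (by linarith)] at hx
  obtain ⟨h1, h2⟩ := hx
  rcases le_or_gt 0 n with h | h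
  · have h' : (0 : ℝ) ≤ (n : ℝ) := by exact_mod_cast h
    nlinarith
  · have h' : (n : ℝ) ≤ -1 := by exact_mod_cast (by omega : n ≤ -1)
    nlinarith

/-- `E_{I,J,K}(f)`: the alternating sum of `f` over the 8 corners of the cube
`Q_{2I,2J,2K} = [2I,2I+1] × [2J,2J+1] × [2K,2K+1]`. -/
noncomputable def Esum (f : ℝ × ℝ × ℝ → ℝ) (I J K : ℤ) : ℝ :=
  ∑ i ∈ Finset.Icc (2 * I) (2 * I + 1), ∑ j ∈ Finset.Icc (2 * J) (2 * J + 1),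
    ∑ k ∈ Finset.Icc (2 * K) (2 * K + 1),
      (-1 : ℝ) ^ (i + j + k) * f ((i : ℝ), (j : ℝ), (k : ℝ))

set_option maxHeartbeats 1000000 in
/-- For every `s ≤ 3/2` there is `C_s > 0` such that for all `a ∈ ℝ` and `(I,J,K) ∈ ℤ³`
(with `a ≠ 0` or `(I,J,K) ≠ 0`), `|E_{I,J,K}(f_{a,s})| ≤ C_s (a² + I² + J² + K²)^{s - 3/2}`,
where `f_{a,s}(x) = (a² + |x|²)^s`. -/
theorem abs_Esum_pow_kernel_le (s : ℝ) (hs : s ≤ 3 / 2) :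
    ∃ C > 0, ∀ (a : ℝ) (I J K : ℤ), (a ≠ 0 ∨ (I, J, K) ≠ ((0 : ℤ), (0 : ℤ), (0 : ℤ))) →
      |Esum (fun p : ℝ × ℝ × ℝ => (a ^ 2 + p.1 ^ 2 + p.2.1 ^ 2 + p.2.2 ^ 2) ^ s) I J K| ≤
        C * (a ^ 2 + (I : ℝ) ^ 2 + (J : ℝ) ^ 2 + (K : ℝ) ^ 2) ^ (s - 3 / 2) := by
  refine ⟨8 * |s| * |s - 1| * |s - 2| + 1, by positivity, ?_⟩
  intro a I J K h
  -- positivity of ρ := a² + I² + J² + K²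
  have hρ : 0 < a ^ 2 + (I : ℝ) ^ 2 + (J : ℝ) ^ 2 + (K : ℝ) ^ 2 := by
    rcases h with h | h
    · have h0 : 0 < a ^ 2 := by positivity
      nlinarith [sq_nonneg (I : ℝ), sq_nonneg (J : ℝ), sq_nonneg (K : ℝ)]
    · have h1 : I ≠ 0 ∨ J ≠ 0 ∨ K ≠ 0 := by
        by_contra hc
        push_neg at hc
        exact h (by simp [hc.1, hc.2.1, hc.2.2])
      have hI2 : ∀ n : ℤ, n ≠ 0 → (1 : ℝ) ≤ (n : ℝ) ^ 2 := by
        intro n hn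
        have : (1 : ℤ) ≤ n ^ 2 := by nlinarith [Int.one_le_abs hn, sq_abs n, abs_nonneg n]
        exact_mod_cast this
      rcases h1 with h1 | h1 | h1 <;>
        nlinarith [hI2 _ h1, sq_nonneg a, sq_nonneg (I:ℝ), sq_nonneg (J:ℝ), sq_nonneg (K:ℝ)]
  -- endpoint square bounds
  have hxI : (I:ℝ)^2 ≤ (2*(I:ℝ))^2 := sq_cast_le Set.left_mem_uIcc
  have hxI1 : (I:ℝ)^2 ≤ (2*(I:ℝ)+1)^2 := sq_cast_le Set.right_mem_uIcc
  have hxJ : (J:ℝ)^2 ≤ (2*(J:ℝ))^2 := sq_cast_le Set.left_mem_uIcc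
  have hxJ1 : (J:ℝ)^2 ≤ (2*(J:ℝ)+1)^2 := sq_cast_le Set.right_mem_uIcc
  -- FTC in z
  have hz : ∀ x y : ℝ, (I:ℝ)^2 ≤ x^2 → (J:ℝ)^2 ≤ y^2 →
      (a^2 + x^2 + y^2 + (2*(K:ℝ)+1)^2)^s - (a^2 + x^2 + y^2 + (2*(K:ℝ))^2)^s
        = ∫ t in (2*(K:ℝ))..(2*(K:ℝ)+1), 2*s*t*(a^2+x^2+y^2+t^2)^(s-1) := by
    intro x y hx hy
    have h0 := ftc_aux 1 (a^2+x^2+y^2) s (2*(K:ℝ))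
      (fun t ht => by linarith [sq_cast_le ht, hρ])
    simpa using h0
  -- FTC in y
  have hyL : ∀ x z : ℝ, (I:ℝ)^2 ≤ x^2 → (K:ℝ)^2 ≤ z^2 →
      2*s*z*(a^2+x^2+(2*(J:ℝ)+1)^2+z^2)^(s-1) - 2*s*z*(a^2+x^2+(2*(J:ℝ))^2+z^2)^(s-1)
        = ∫ t in (2*(J:ℝ))..(2*(J:ℝ)+1), 2*(2*s*z)*(s-1)*t*(a^2+x^2+t^2+z^2)^(s-2) := by
    intro x z hx hz'
    have h0 := ftc_aux (2*s*z) (a^2+x^2+z^2) (s-1) (2*(J:ℝ))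
      (fun t ht => by linarith [sq_cast_le ht, hρ])
    rw [show a^2+x^2+(2*(J:ℝ)+1)^2+z^2 = a^2+x^2+z^2+(2*(J:ℝ)+1)^2 from by ring,
        show a^2+x^2+(2*(J:ℝ))^2+z^2 = a^2+x^2+z^2+(2*(J:ℝ))^2 from by ring, h0]
    apply intervalIntegral.integral_congr
    intro t ht
    simp only
    rw [show a^2+x^2+z^2+t^2 = a^2+x^2+t^2+z^2 from by ring, show s-1-1 = s-2 from by ring]
  -- FTC in x
  have hxL : ∀ y z : ℝ, (J:ℝ)^2 ≤ y^2 → (K:ℝ)^2 ≤ z^2 →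
      2*(2*s*z)*(s-1)*y*(a^2+(2*(I:ℝ)+1)^2+y^2+z^2)^(s-2)
        - 2*(2*s*z)*(s-1)*y*(a^2+(2*(I:ℝ))^2+y^2+z^2)^(s-2)
        = ∫ t in (2*(I:ℝ))..(2*(I:ℝ)+1), 2*(2*(2*s*z)*(s-1)*y)*(s-2)*t*(a^2+t^2+y^2+z^2)^(s-3) := by
    intro y z hy hz'
    have h0 := ftc_aux (2*(2*s*z)*(s-1)*y) (a^2+y^2+z^2) (s-2) (2*(I:ℝ))
      (fun t ht => by linarith [sq_cast_le ht, hρ])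
    rw [show a^2+(2*(I:ℝ)+1)^2+y^2+z^2 = a^2+y^2+z^2+(2*(I:ℝ)+1)^2 from by ring,
        show a^2+(2*(I:ℝ))^2+y^2+z^2 = a^2+y^2+z^2+(2*(I:ℝ))^2 from by ring, h0]
    apply intervalIntegral.integral_congr
    intro t ht
    simp only
    rw [show a^2+y^2+z^2+t^2 = a^2+t^2+y^2+z^2 from by ring, show s-2-1 = s-3 from by ring]
  -- integrability in z of the first-derivative corner functions
  have igen : ∀ x y : ℝ, (I:ℝ)^2 ≤ x^2 → (J:ℝ)^2 ≤ y^2 →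
      IntervalIntegrable (fun t => 2*s*t*(a^2+x^2+y^2+t^2)^(s-1))
        MeasureTheory.volume (2*(K:ℝ)) (2*(K:ℝ)+1) := by
    intro x y hx hy
    exact cont_aux (2*s) (a^2+x^2+y^2) (s-1) (fun t ht => by linarith [sq_cast_le ht, hρ])
  -- corner expansion of Esum
  have hcorners : Esum (fun p : ℝ × ℝ × ℝ => (a ^ 2 + p.1 ^ 2 + p.2.1 ^ 2 + p.2.2 ^ 2) ^ s) I J K =
      (a^2+(2*(I:ℝ))^2+(2*(J:ℝ))^2+(2*(K:ℝ))^2)^s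
      - (a^2+(2*(I:ℝ)+1)^2+(2*(J:ℝ))^2+(2*(K:ℝ))^2)^s
      - (a^2+(2*(I:ℝ))^2+(2*(J:ℝ)+1)^2+(2*(K:ℝ))^2)^s
      + (a^2+(2*(I:ℝ)+1)^2+(2*(J:ℝ)+1)^2+(2*(K:ℝ))^2)^s
      - (a^2+(2*(I:ℝ))^2+(2*(J:ℝ))^2+(2*(K:ℝ)+1)^2)^s
      + (a^2+(2*(I:ℝ)+1)^2+(2*(J:ℝ))^2+(2*(K:ℝ)+1)^2)^s
      + (a^2+(2*(I:ℝ))^2+(2*(J:ℝ)+1)^2+(2*(K:ℝ)+1)^2)^s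
      - (a^2+(2*(I:ℝ)+1)^2+(2*(J:ℝ)+1)^2+(2*(K:ℝ)+1)^2)^s := by
    have h1 : ∀ m : ℤ, (-1:ℝ)^(2*m) = 1 := fun m => by
      rw [zpow_mul]; norm_num
    have h2 : ∀ m : ℤ, (-1:ℝ)^(2*m+1) = -1 := fun m => by
      rw [zpow_add₀ (by norm_num : (-1:ℝ) ≠ 0), h1]; norm_num
    have hIcc : ∀ n : ℤ, Finset.Icc (2*n) (2*n+1) = {2*n, 2*n+1} := by
      intro n; ext m; simp [Finset.mem_Icc]; omega
    simp only [Esum, hIcc,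
      Finset.sum_pair (show (2*I) ≠ 2*I+1 by omega),
      Finset.sum_pair (show (2*J) ≠ 2*J+1 by omega),
      Finset.sum_pair (show (2*K) ≠ 2*K+1 by omega)]
    push_cast
    simp only [show ∀ i j k : ℤ, (-1:ℝ)^(i+j+k) = (-1:ℝ)^i * (-1:ℝ)^j * (-1:ℝ)^k from
      fun i j k => by rw [zpow_add₀ (by norm_num : (-1:ℝ) ≠ 0),
        zpow_add₀ (by norm_num : (-1:ℝ) ≠ 0)],
      h1, h2]
    ring
  -- the chain: Esum = - triple integral
  have key : Esum (fun p : ℝ × ℝ × ℝ => (a ^ 2 + p.1 ^ 2 + p.2.1 ^ 2 + p.2.2 ^ 2) ^ s) I J K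
      = -(∫ z in (2*(K:ℝ))..(2*(K:ℝ)+1), ∫ y in (2*(J:ℝ))..(2*(J:ℝ)+1),
          ∫ x in (2*(I:ℝ))..(2*(I:ℝ)+1),
            2*(2*(2*s*z)*(s-1)*y)*(s-2)*x*(a^2+x^2+y^2+z^2)^(s-3)) := by
    have i1 := igen (2*(I:ℝ)+1) (2*(J:ℝ)+1) hxI1 hxJ1
    have i2 := igen (2*(I:ℝ)) (2*(J:ℝ)+1) hxI hxJ1
    have i3 := igen (2*(I:ℝ)+1) (2*(J:ℝ)) hxI1 hxJ
    have i4 := igen (2*(I:ℝ)) (2*(J:ℝ)) hxI hxJ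
    have t1 : (∫ z in (2*(K:ℝ))..(2*(K:ℝ)+1), 2*s*z*(a^2+(2*(I:ℝ)+1)^2+(2*(J:ℝ)+1)^2+z^2)^(s-1))
        - (∫ z in (2*(K:ℝ))..(2*(K:ℝ)+1), 2*s*z*(a^2+(2*(I:ℝ))^2+(2*(J:ℝ)+1)^2+z^2)^(s-1))
        - (∫ z in (2*(K:ℝ))..(2*(K:ℝ)+1), 2*s*z*(a^2+(2*(I:ℝ)+1)^2+(2*(J:ℝ))^2+z^2)^(s-1))
        + (∫ z in (2*(K:ℝ))..(2*(K:ℝ)+1), 2*s*z*(a^2+(2*(I:ℝ))^2+(2*(J:ℝ))^2+z^2)^(s-1))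
        = ∫ z in (2*(K:ℝ))..(2*(K:ℝ)+1), ∫ y in (2*(J:ℝ))..(2*(J:ℝ)+1),
            ∫ x in (2*(I:ℝ))..(2*(I:ℝ)+1),
              2*(2*(2*s*z)*(s-1)*y)*(s-2)*x*(a^2+x^2+y^2+z^2)^(s-3) := by
      rw [← intervalIntegral.integral_sub i1 i2,
          ← intervalIntegral.integral_sub (i1.sub i2) i3,
          ← intervalIntegral.integral_add ((i1.sub i2).sub i3) i4]
      apply intervalIntegral.integral_congr
      intro z hzm
      simp only
      have hzsq := sq_cast_le hzm
      have jgen : ∀ x : ℝ, (I:ℝ)^2 ≤ x^2 →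
          IntervalIntegrable (fun t => 2*(2*s*z)*(s-1)*t*(a^2+x^2+t^2+z^2)^(s-2))
            MeasureTheory.volume (2*(J:ℝ)) (2*(J:ℝ)+1) := by
        intro x hx
        have heq : (fun t:ℝ => 2*(2*s*z)*(s-1)*t*(a^2+x^2+t^2+z^2)^(s-2))
            = fun t:ℝ => 2*(2*s*z)*(s-1)*t*(a^2+x^2+z^2+t^2)^(s-2) := by
          funext t; rw [show a^2+x^2+t^2+z^2 = a^2+x^2+z^2+t^2 from by ring]
        rw [heq]
        exact cont_aux (2*(2*s*z)*(s-1)) (a^2+x^2+z^2) (s-2)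
          (fun t ht => by linarith [sq_cast_le ht, hρ])
      have j1 := jgen (2*(I:ℝ)+1) hxI1
      have j2 := jgen (2*(I:ℝ)) hxI
      have t3 : (∫ t in (2*(J:ℝ))..(2*(J:ℝ)+1),
            (2*(2*s*z)*(s-1)*t*(a^2+(2*(I:ℝ)+1)^2+t^2+z^2)^(s-2)
              - 2*(2*s*z)*(s-1)*t*(a^2+(2*(I:ℝ))^2+t^2+z^2)^(s-2)))
          = ∫ y in (2*(J:ℝ))..(2*(J:ℝ)+1), ∫ x in (2*(I:ℝ))..(2*(I:ℝ)+1),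
              2*(2*(2*s*z)*(s-1)*y)*(s-2)*x*(a^2+x^2+y^2+z^2)^(s-3) := by
        apply intervalIntegral.integral_congr
        intro y hym
        simp only
        exact hxL y z (sq_cast_le hym) hzsq
      rw [← t3, intervalIntegral.integral_sub j1 j2]
      have e1 := hyL (2*(I:ℝ)+1) z hxI1 hzsq
      have e2 := hyL (2*(I:ℝ)) z hxI hzsq
      linear_combination e1 - e2
    rw [hcorners]
    have hA := hz (2*(I:ℝ)+1) (2*(J:ℝ)+1) hxI1 hxJ1
    have hB := hz (2*(I:ℝ)) (2*(J:ℝ)+1) hxI hxJ1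
    have hC := hz (2*(I:ℝ)+1) (2*(J:ℝ)) hxI1 hxJ
    have hD := hz (2*(I:ℝ)) (2*(J:ℝ)) hxI hxJ
    linear_combination (-1 : ℝ) * hA + hB + hC - hD - t1
  -- pointwise bound on the innermost integrand
  have hbound : ∀ x y z : ℝ, (I:ℝ)^2 ≤ x^2 → (J:ℝ)^2 ≤ y^2 → (K:ℝ)^2 ≤ z^2 →
      |2*(2*(2*s*z)*(s-1)*y)*(s-2)*x*(a^2+x^2+y^2+z^2)^(s-3)|
        ≤ 8 * |s| * |s - 1| * |s - 2| * (a^2+(I:ℝ)^2+(J:ℝ)^2+(K:ℝ)^2)^(s-3/2) := by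
    intro x y z hx hy hz'
    have hup : 0 < a^2+x^2+y^2+z^2 := by linarith
    have h1 : |2*(2*(2*s*z)*(s-1)*y)*(s-2)*x*(a^2+x^2+y^2+z^2)^(s-3)|
        = 8 * |s| * |s - 1| * |s - 2| * (|x| * |y| * |z|)*(a^2+x^2+y^2+z^2)^(s-3) := by
      rw [show 2*(2*(2*s*z)*(s-1)*y)*(s-2)*x*(a^2+x^2+y^2+z^2)^(s-3)
          = (8*(s*((s-1)*((s-2)*(x*(y*z))))))*(a^2+x^2+y^2+z^2)^(s-3) from by ring]
      rw [abs_mul, abs_of_pos (Real.rpow_pos_of_pos hup _)]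
      simp only [abs_mul]
      rw [abs_of_nonneg (by norm_num : (0:ℝ) ≤ 8)]
      ring
    rw [h1]
    have hle : ∀ w : ℝ, w^2 ≤ a^2+x^2+y^2+z^2 → |w| ≤ (a^2+x^2+y^2+z^2)^((1:ℝ)/2) := by
      intro w hw
      rw [← Real.sqrt_eq_rpow, ← Real.sqrt_sq_eq_abs]
      exact Real.sqrt_le_sqrt hw
    have hx' := hle x (by linarith [sq_nonneg a, sq_nonneg y, sq_nonneg z])
    have hy' := hle y (by linarith [sq_nonneg a, sq_nonneg x, sq_nonneg z])
    have hz'' := hle z (by linarith [sq_nonneg a, sq_nonneg x, sq_nonneg y])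
    have hh : |x| * |y| * |z| ≤ (a^2+x^2+y^2+z^2)^((1:ℝ)/2) * (a^2+x^2+y^2+z^2)^((1:ℝ)/2)
        * (a^2+x^2+y^2+z^2)^((1:ℝ)/2) := by
      have h0 : (0:ℝ) ≤ (a^2+x^2+y^2+z^2)^((1:ℝ)/2) := Real.rpow_nonneg hup.le _
      exact mul_le_mul (mul_le_mul hx' hy' (abs_nonneg _) h0) hz'' (abs_nonneg _)
        (mul_nonneg h0 h0)
    have step1 : 8 * |s| * |s - 1| * |s - 2| * (|x| * |y| * |z|)*(a^2+x^2+y^2+z^2)^(s-3)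
        ≤ 8 * |s| * |s - 1| * |s - 2| * (a^2+x^2+y^2+z^2)^(s-3/2) := by
      have hprod : (a^2+x^2+y^2+z^2)^((1:ℝ)/2) * (a^2+x^2+y^2+z^2)^((1:ℝ)/2)
          * (a^2+x^2+y^2+z^2)^((1:ℝ)/2) * (a^2+x^2+y^2+z^2)^(s-3)
          = (a^2+x^2+y^2+z^2)^(s-3/2) := by
        rw [← Real.rpow_add hup, ← Real.rpow_add hup, ← Real.rpow_add hup]
        congr 1
        ring
      calc 8 * |s| * |s - 1| * |s - 2| * (|x| * |y| * |z|)*(a^2+x^2+y^2+z^2)^(s-3)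
          ≤ 8 * |s| * |s - 1| * |s - 2| * ((a^2+x^2+y^2+z^2)^((1:ℝ)/2) * (a^2+x^2+y^2+z^2)^((1:ℝ)/2)
            * (a^2+x^2+y^2+z^2)^((1:ℝ)/2))*(a^2+x^2+y^2+z^2)^(s-3) := by
            have hr3 : (0:ℝ) ≤ (a^2+x^2+y^2+z^2)^(s-3) := Real.rpow_nonneg hup.le _
            have hc : (0:ℝ) ≤ 8 * |s| * |s - 1| * |s - 2| := by positivity
            nlinarith [mul_le_mul_of_nonneg_left hh hc, mul_le_mul_of_nonneg_right
              (mul_le_mul_of_nonneg_left hh hc) hr3]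
        _ = 8 * |s| * |s - 1| * |s - 2| * (a^2+x^2+y^2+z^2)^(s-3/2) := by
            rw [← hprod]; ring
    refine step1.trans ?_
    exact mul_le_mul_of_nonneg_left
      (Real.rpow_le_rpow_of_nonpos hρ (by linarith) (by linarith))
      (by positivity)
  -- final bound
  rw [key, abs_neg]
  have hM0 : (0:ℝ) ≤ 8 * |s| * |s - 1| * |s - 2| * (a^2+(I:ℝ)^2+(J:ℝ)^2+(K:ℝ)^2)^(s-3/2) := by
    positivity
  have bx : ∀ y z : ℝ, (J:ℝ)^2 ≤ y^2 → (K:ℝ)^2 ≤ z^2 →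
      |∫ x in (2*(I:ℝ))..(2*(I:ℝ)+1), 2*(2*(2*s*z)*(s-1)*y)*(s-2)*x*(a^2+x^2+y^2+z^2)^(s-3)|
        ≤ 8 * |s| * |s - 1| * |s - 2| * (a^2+(I:ℝ)^2+(J:ℝ)^2+(K:ℝ)^2)^(s-3/2) := by
    intro y z hy hz'
    have := intervalIntegral.norm_integral_le_of_norm_le_const
      (C := 8 * |s| * |s - 1| * |s - 2| * (a^2+(I:ℝ)^2+(J:ℝ)^2+(K:ℝ)^2)^(s-3/2))
      (f := fun x => 2*(2*(2*s*z)*(s-1)*y)*(s-2)*x*(a^2+x^2+y^2+z^2)^(s-3))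
      (a := 2*(I:ℝ)) (b := 2*(I:ℝ)+1)
      (fun x hxm => by
        rw [Real.norm_eq_abs]
        exact hbound x y z (sq_cast_le (Set.uIoc_subset_uIcc hxm)) hy hz')
    rw [Real.norm_eq_abs, show |2*(I:ℝ)+1 - 2*(I:ℝ)| = 1 from by norm_num, mul_one] at this
    exact this
  have by' : ∀ z : ℝ, (K:ℝ)^2 ≤ z^2 →
      |∫ y in (2*(J:ℝ))..(2*(J:ℝ)+1), ∫ x in (2*(I:ℝ))..(2*(I:ℝ)+1),
          2*(2*(2*s*z)*(s-1)*y)*(s-2)*x*(a^2+x^2+y^2+z^2)^(s-3)|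
        ≤ 8 * |s| * |s - 1| * |s - 2| * (a^2+(I:ℝ)^2+(J:ℝ)^2+(K:ℝ)^2)^(s-3/2) := by
    intro z hz'
    have := intervalIntegral.norm_integral_le_of_norm_le_const
      (C := 8 * |s| * |s - 1| * |s - 2| * (a^2+(I:ℝ)^2+(J:ℝ)^2+(K:ℝ)^2)^(s-3/2))
      (f := fun y => ∫ x in (2*(I:ℝ))..(2*(I:ℝ)+1),
          2*(2*(2*s*z)*(s-1)*y)*(s-2)*x*(a^2+x^2+y^2+z^2)^(s-3))
      (a := 2*(J:ℝ)) (b := 2*(J:ℝ)+1)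
      (fun y hym => by
        rw [Real.norm_eq_abs]
        exact bx y z (sq_cast_le (Set.uIoc_subset_uIcc hym)) hz')
    rw [Real.norm_eq_abs, show |2*(J:ℝ)+1 - 2*(J:ℝ)| = 1 from by norm_num, mul_one] at this
    exact this
  have bz : |∫ z in (2*(K:ℝ))..(2*(K:ℝ)+1), ∫ y in (2*(J:ℝ))..(2*(J:ℝ)+1),
        ∫ x in (2*(I:ℝ))..(2*(I:ℝ)+1),
          2*(2*(2*s*z)*(s-1)*y)*(s-2)*x*(a^2+x^2+y^2+z^2)^(s-3)|
      ≤ 8 * |s| * |s - 1| * |s - 2| * (a^2+(I:ℝ)^2+(J:ℝ)^2+(K:ℝ)^2)^(s-3/2) := by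
    have := intervalIntegral.norm_integral_le_of_norm_le_const
      (C := 8 * |s| * |s - 1| * |s - 2| * (a^2+(I:ℝ)^2+(J:ℝ)^2+(K:ℝ)^2)^(s-3/2))
      (f := fun z => ∫ y in (2*(J:ℝ))..(2*(J:ℝ)+1), ∫ x in (2*(I:ℝ))..(2*(I:ℝ)+1),
          2*(2*(2*s*z)*(s-1)*y)*(s-2)*x*(a^2+x^2+y^2+z^2)^(s-3))
      (a := 2*(K:ℝ)) (b := 2*(K:ℝ)+1)
      (fun z hzm => by
        rw [Real.norm_eq_abs]
        exact by' z (sq_cast_le (Set.uIoc_subset_uIcc hzm)))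
    rw [Real.norm_eq_abs, show |2*(K:ℝ)+1 - 2*(K:ℝ)| = 1 from by norm_num, mul_one] at this
    exact this
  refine bz.trans ?_
  have hX : 0 < (a^2+(I:ℝ)^2+(J:ℝ)^2+(K:ℝ)^2)^(s-3/2) := Real.rpow_pos_of_pos hρ _
  nlinarith [abs_nonneg s, abs_nonneg (s - 1), abs_nonneg (s - 2),
    mul_nonneg (mul_nonneg (abs_nonneg s) (abs_nonneg (s - 1))) (abs_nonneg (s - 2))]
end

section
/- Let a ∈ ℝ and s > 0, and let (I,J,K) ∈ ℤ³ with I ≥ 0, J ≥ 0, K ≥ 0, and assume a ≠ 0 or (I,J,K) ≠ (0,0,0). Then E_{I,J,K}(f_{a,-s}) ≥ 0; that is, the block sums of the alternating lattice series with terms (a²+i²+j²+k²)^{-s} are sign-definite in the octant I,J,K ≥ 0. -/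
open scoped BigOperators

lemma hasDerivAt_shift_rpow (c e : ℝ) (t : ℝ) (h : 0 < c + t) :
    HasDerivAt (fun u : ℝ => (c + u) ^ e) (e * (c + t) ^ (e - 1)) t := by
  have h1 : HasDerivAt (fun u : ℝ => c + u) 1 t := (hasDerivAt_id t).const_add c
  simpa using h1.rpow_const (Or.inl h.ne')

lemma diff_antitone (b q e : ℝ) (hb : 0 < b) (hq : 0 ≤ q) (he : e < 0) :
    AntitoneOn (fun t => (b + t) ^ e - (b + q + t) ^ e) (Set.Ici (0:ℝ)) := by
  have hbq : 0 < b + q := by linarith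
  apply antitoneOn_of_hasDerivWithinAt_nonpos (convex_Ici 0)
    (f' := fun t => e * (b + t) ^ (e - 1) - e * (b + q + t) ^ (e - 1))
  · apply ContinuousOn.sub
    · apply ContinuousOn.rpow_const (by fun_prop)
      intro x hx
      simp only [Set.mem_Ici] at hx
      exact Or.inl (show (0:ℝ) < _ + x by linarith).ne'
    · apply ContinuousOn.rpow_const (by fun_prop)
      intro x hx
      simp only [Set.mem_Ici] at hx
      exact Or.inl (show (0:ℝ) < _ + x by linarith).ne'
  · intro x hx
    rw [interior_Ici] at hx
    simp only [Set.mem_Ioi] at hx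
    exact (((hasDerivAt_shift_rpow b e x (by linarith)).sub
      (hasDerivAt_shift_rpow (b+q) e x (by linarith))).hasDerivWithinAt)
  · intro x hx
    rw [interior_Ici] at hx
    simp only [Set.mem_Ioi] at hx
    have h1 : (b + q + x) ^ (e-1) ≤ (b + x) ^ (e-1) :=
      Real.rpow_le_rpow_of_nonpos (by linarith) (by linarith) (by linarith)
    nlinarith

lemma h_antitone (b q r s : ℝ) (hb : 0 < b) (hq : 0 ≤ q) (hr : 0 ≤ r) (hs : 0 < s) :
    AntitoneOn (fun t => (b + t) ^ (-s) - (b + q + t) ^ (-s)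
      - (b + r + t) ^ (-s) + (b + q + r + t) ^ (-s)) (Set.Ici (0:ℝ)) := by
  apply antitoneOn_of_hasDerivWithinAt_nonpos (convex_Ici 0)
    (f' := fun t => (-s) * (b + t) ^ (-s - 1) - (-s) * (b + q + t) ^ (-s - 1)
      - (-s) * (b + r + t) ^ (-s - 1) + (-s) * (b + q + r + t) ^ (-s - 1))
  · have : ∀ c : ℝ, 0 < c → ContinuousOn (fun t : ℝ => (c + t) ^ (-s)) (Set.Ici 0) := by
      intro c hc
      apply ContinuousOn.rpow_const (by fun_prop)
      intro x hx
      simp only [Set.mem_Ici] at hx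
      exact Or.inl (show (0:ℝ) < c + x by linarith).ne'
    exact (((this b hb).sub (this _ (by linarith))).sub (this _ (by linarith))).add
      (this _ (by linarith))
  · intro x hx
    rw [interior_Ici] at hx
    simp only [Set.mem_Ioi] at hx
    have d : ∀ c : ℝ, 0 < c + x → HasDerivAt (fun u : ℝ => (c + u) ^ (-s))
        ((-s) * (c + x) ^ (-s - 1)) x := fun c h => hasDerivAt_shift_rpow c (-s) x h
    exact ((((d b (by linarith)).sub (d _ (by linarith))).sub (d _ (by linarith))).add
      (d _ (by linarith))).hasDerivWithinAt
  · intro x hx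
    rw [interior_Ici] at hx
    simp only [Set.mem_Ioi] at hx
    have key := diff_antitone b q (-s - 1) hb hq (by linarith)
      (Set.mem_Ici.mpr hx.le) (Set.mem_Ici.mpr (by linarith : (0:ℝ) ≤ x + r))
      (by linarith : x ≤ x + r)
    simp only [] at key
    rw [show b + (x + r) = b + r + x by ring, show b + q + (x + r) = b + q + r + x by ring]
      at key
    nlinarith

lemma block_nonneg (b p q r s : ℝ) (hb : 0 < b) (hp : 0 ≤ p) (hq : 0 ≤ q) (hr : 0 ≤ r)
    (hs : 0 < s) :
    0 ≤ b ^ (-s) - (b+p) ^ (-s) - (b+q) ^ (-s) - (b+r) ^ (-s)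
      + (b+p+q) ^ (-s) + (b+p+r) ^ (-s) + (b+q+r) ^ (-s) - (b+p+q+r) ^ (-s) := by
  have key := h_antitone b q r s hb hq hr hs (Set.mem_Ici.mpr le_rfl)
    (Set.mem_Ici.mpr hp) hp
  simp only [] at key
  rw [show b + 0 = b by ring, show b + q + 0 = b + q by ring, show b + r + 0 = b + r by ring,
    show b + q + r + 0 = b + q + r by ring, show b + q + p = b + p + q by ring,
    show b + r + p = b + p + r by ring, show b + q + r + p = b + p + q + r by ring] at key
  linarith

lemma Esum_expand (f : ℝ × ℝ × ℝ → ℝ) (I J K : ℤ) : Esum f I J K =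
    f (2*I, 2*J, 2*K) - f (2*I+1, 2*J, 2*K) - f (2*I, 2*J+1, 2*K) - f (2*I, 2*J, 2*K+1)
    + f (2*I+1, 2*J+1, 2*K) + f (2*I+1, 2*J, 2*K+1) + f (2*I, 2*J+1, 2*K+1)
    - f (2*I+1, 2*J+1, 2*K+1) := by
  have hIcc : ∀ n : ℤ, Finset.Icc n (n+1) = {n, n+1} := by
    intro n; ext m; simp [Finset.mem_Icc]; omega
  have hne : ∀ n : ℤ, n ≠ n + 1 := fun n => by omega
  have hev : ∀ n : ℤ, (-1 : ℝ) ^ (2*n) = 1 := by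
    intro n
    rw [zpow_mul]; norm_num
  have hodd : ∀ n : ℤ, (-1 : ℝ) ^ (2*n+1) = -1 := by
    intro n
    rw [zpow_add₀ (by norm_num : (-1:ℝ) ≠ 0), hev]; norm_num
  rw [Esum, hIcc, hIcc, hIcc]
  rw [Finset.sum_pair (hne _)]
  rw [Finset.sum_pair (hne _), Finset.sum_pair (hne _), Finset.sum_pair (hne _),
    Finset.sum_pair (hne _), Finset.sum_pair (hne _), Finset.sum_pair (hne _)]
  rw [show 2*I + 2*J + 2*K = 2*(I+J+K) by ring,
    show 2*I + 2*J + (2*K+1) = 2*(I+J+K)+1 by ring,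
    show 2*I + (2*J+1) + 2*K = 2*(I+J+K)+1 by ring,
    show 2*I + (2*J+1) + (2*K+1) = 2*(I+J+K+1) by ring,
    show 2*I+1 + 2*J + 2*K = 2*(I+J+K)+1 by ring,
    show 2*I+1 + 2*J + (2*K+1) = 2*(I+J+K+1) by ring,
    show 2*I+1 + (2*J+1) + 2*K = 2*(I+J+K+1) by ring,
    show 2*I+1 + (2*J+1) + (2*K+1) = 2*(I+J+K+1)+1 by ring]
  simp only [hodd, hev]
  push_cast
  ring

/-- For `a ∈ ℝ`, `s > 0` and `I, J, K ≥ 0` (with `a ≠ 0` or `(I,J,K) ≠ 0`), the block sums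
`E_{I,J,K}(f_{a,-s})` of the alternating lattice series with terms `(a²+i²+j²+k²)^{-s}` are
nonnegative: the block sums are sign-definite in the octant `I, J, K ≥ 0`. -/
theorem Esum_pow_kernel_nonneg (a s : ℝ) (hs : 0 < s) (I J K : ℤ)
    (hI : 0 ≤ I) (hJ : 0 ≤ J) (hK : 0 ≤ K)
    (h : a ≠ 0 ∨ (I, J, K) ≠ ((0 : ℤ), (0 : ℤ), (0 : ℤ))) :
    0 ≤ Esum (fun p : ℝ × ℝ × ℝ => (a ^ 2 + p.1 ^ 2 + p.2.1 ^ 2 + p.2.2 ^ 2) ^ (-s)) I J K := by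
  rw [Esum_expand]
  simp only []
  have hiR : (0:ℝ) ≤ (I:ℝ) := by exact_mod_cast hI
  have hjR : (0:ℝ) ≤ (J:ℝ) := by exact_mod_cast hJ
  have hkR : (0:ℝ) ≤ (K:ℝ) := by exact_mod_cast hK
  have hb : 0 < a ^ 2 + (2*(I:ℝ)) ^ 2 + (2*(J:ℝ)) ^ 2 + (2*(K:ℝ)) ^ 2 := by
    rcases h with ha | hIJK
    · have : 0 < a ^ 2 := by positivity
      nlinarith
    · have : I ≠ 0 ∨ J ≠ 0 ∨ K ≠ 0 := by
        by_contra hc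
        push_neg at hc
        exact hIJK (by simp [hc.1, hc.2.1, hc.2.2])
      rcases this with hI0 | hJ0 | hK0
      · have : (1:ℝ) ≤ (I:ℝ) := by exact_mod_cast (by omega : (1:ℤ) ≤ I)
        nlinarith
      · have : (1:ℝ) ≤ (J:ℝ) := by exact_mod_cast (by omega : (1:ℤ) ≤ J)
        nlinarith
      · have : (1:ℝ) ≤ (K:ℝ) := by exact_mod_cast (by omega : (1:ℤ) ≤ K)
        nlinarith
  have key := block_nonneg (a ^ 2 + (2*(I:ℝ)) ^ 2 + (2*(J:ℝ)) ^ 2 + (2*(K:ℝ)) ^ 2)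
    (4*(I:ℝ)+1) (4*(J:ℝ)+1) (4*(K:ℝ)+1) s hb (by linarith) (by linarith) (by linarith) hs
  rw [show a ^ 2 + (2*(I:ℝ)+1) ^ 2 + (2*(J:ℝ)) ^ 2 + (2*(K:ℝ)) ^ 2
      = a ^ 2 + (2*(I:ℝ)) ^ 2 + (2*(J:ℝ)) ^ 2 + (2*(K:ℝ)) ^ 2 + (4*(I:ℝ)+1) by ring,
    show a ^ 2 + (2*(I:ℝ)) ^ 2 + (2*(J:ℝ)+1) ^ 2 + (2*(K:ℝ)) ^ 2
      = a ^ 2 + (2*(I:ℝ)) ^ 2 + (2*(J:ℝ)) ^ 2 + (2*(K:ℝ)) ^ 2 + (4*(J:ℝ)+1) by ring,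
    show a ^ 2 + (2*(I:ℝ)) ^ 2 + (2*(J:ℝ)) ^ 2 + (2*(K:ℝ)+1) ^ 2
      = a ^ 2 + (2*(I:ℝ)) ^ 2 + (2*(J:ℝ)) ^ 2 + (2*(K:ℝ)) ^ 2 + (4*(K:ℝ)+1) by ring,
    show a ^ 2 + (2*(I:ℝ)+1) ^ 2 + (2*(J:ℝ)+1) ^ 2 + (2*(K:ℝ)) ^ 2
      = a ^ 2 + (2*(I:ℝ)) ^ 2 + (2*(J:ℝ)) ^ 2 + (2*(K:ℝ)) ^ 2 + (4*(I:ℝ)+1) + (4*(J:ℝ)+1) by ring,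
    show a ^ 2 + (2*(I:ℝ)+1) ^ 2 + (2*(J:ℝ)) ^ 2 + (2*(K:ℝ)+1) ^ 2
      = a ^ 2 + (2*(I:ℝ)) ^ 2 + (2*(J:ℝ)) ^ 2 + (2*(K:ℝ)) ^ 2 + (4*(I:ℝ)+1) + (4*(K:ℝ)+1) by ring,
    show a ^ 2 + (2*(I:ℝ)) ^ 2 + (2*(J:ℝ)+1) ^ 2 + (2*(K:ℝ)+1) ^ 2
      = a ^ 2 + (2*(I:ℝ)) ^ 2 + (2*(J:ℝ)) ^ 2 + (2*(K:ℝ)) ^ 2 + (4*(J:ℝ)+1) + (4*(K:ℝ)+1) by ring,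
    show a ^ 2 + (2*(I:ℝ)+1) ^ 2 + (2*(J:ℝ)+1) ^ 2 + (2*(K:ℝ)+1) ^ 2
      = a ^ 2 + (2*(I:ℝ)) ^ 2 + (2*(J:ℝ)) ^ 2 + (2*(K:ℝ)) ^ 2 + (4*(I:ℝ)+1) + (4*(J:ℝ)+1) + (4*(K:ℝ)+1) by ring]
  linarith
end

section
/- Let f : ℝ³ \ {0} → (0,∞) be continuous and suppose there is a constant C₂ > 0 such that C₂ · max_{x ∈ Q_{i,j,k}} f(x) ≤ min_{x ∈ Q_{i,j,k}} f(x) for every (i,j,k) ∈ ℤ³ whose unit cube Q_{i,j,k} does not contain 0. Then for every domain Ω ⊂ ℝ³ with 0 ∉ Ω, one has ∑_{p ∈ Ω_lat} f(p) ≤ (8/C₂) ∫_Ω f(x) dx, where Ω_lat := { p ∈ ℤ³ : there exists (I,J,K) ∈ ℤ³ with p ∈ Q_{I,J,K}, Q_{I,J,K} ⊆ Ω and 0 ∉ Q_{I,J,K} }. -/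
open scoped BigOperators ENNReal

open MeasureTheory Set

/-- The closed unit cube `Q_{i,j,k} = [i,i+1] × [j,j+1] × [k,k+1] ⊂ ℝ³`. -/
def unitCube (i j k : ℤ) : Set (ℝ × ℝ × ℝ) :=
  Set.Icc ((i : ℝ), (j : ℝ), (k : ℝ)) ((i : ℝ) + 1, (j : ℝ) + 1, (k : ℝ) + 1)

lemma vol_prod3 (s t u : Set ℝ) :
    volume (s ×ˢ (t ×ˢ u)) = volume s * (volume t * volume u) := by
  rw [Measure.volume_eq_prod ℝ (ℝ × ℝ), Measure.prod_prod,
    Measure.volume_eq_prod ℝ ℝ, Measure.prod_prod]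

lemma unitCube_eq (i j k : ℤ) :
    unitCube i j k =
      Icc (i : ℝ) ((i : ℝ) + 1) ×ˢ (Icc (j : ℝ) ((j : ℝ) + 1) ×ˢ Icc (k : ℝ) ((k : ℝ) + 1)) := by
  rw [unitCube, Set.Icc_prod_eq, Set.Icc_prod_eq]

lemma oneD_half (m n : ℤ) (h1 : (m : ℝ) ≤ (n : ℝ)) (h2 : (n : ℝ) ≤ (m : ℝ) + 1) :
    volume (Icc (m : ℝ) ((m : ℝ) + 1) ∩ Icc ((n : ℝ) - 1/2) ((n : ℝ) + 1/2))
      = ENNReal.ofReal (1/2) := by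
  have h1' : m ≤ n := by exact_mod_cast h1
  have h2' : n ≤ m + 1 := by
    have : (n : ℝ) ≤ ((m + 1 : ℤ) : ℝ) := by push_cast; linarith
    exact_mod_cast this
  rw [Set.Icc_inter_Icc, Real.volume_Icc]
  congr 1
  rcases (by omega : n = m ∨ n = m + 1) with rfl | rfl
  · rw [max_eq_left (by linarith), min_eq_right (by linarith)]
    ring
  · push_cast
    rw [max_eq_right (by linarith), min_eq_left (by linarith)]
    ring

lemma oneD_zero (n n' : ℤ) (h : n ≠ n') :
    volume (Icc ((n : ℝ) - 1/2) ((n : ℝ) + 1/2) ∩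
      Icc ((n' : ℝ) - 1/2) ((n' : ℝ) + 1/2)) = 0 := by
  rw [Set.Icc_inter_Icc, Real.volume_Icc, ENNReal.ofReal_eq_zero]
  have hl1 : min ((n : ℝ) + 1/2) ((n' : ℝ) + 1/2) ≤ (n : ℝ) + 1/2 := min_le_left _ _
  have hl2 : min ((n : ℝ) + 1/2) ((n' : ℝ) + 1/2) ≤ (n' : ℝ) + 1/2 := min_le_right _ _
  have hr1 : (n : ℝ) - 1/2 ≤ max ((n : ℝ) - 1/2) ((n' : ℝ) - 1/2) := le_max_left _ _
  have hr2 : (n' : ℝ) - 1/2 ≤ max ((n : ℝ) - 1/2) ((n' : ℝ) - 1/2) := le_max_right _ _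
  rcases lt_or_gt_of_ne h with hlt | hlt
  · have : (n : ℝ) + 1 ≤ (n' : ℝ) := by exact_mod_cast hlt
    linarith
  · have : (n' : ℝ) + 1 ≤ (n : ℝ) := by exact_mod_cast hlt
    linarith

/-- Lemma on comparison of lattice sums with integrals: if `f` is continuous and positive
away from `0` and `C₂ · max_{Q_{i,j,k}} f ≤ min_{Q_{i,j,k}} f` on every integer unit cube
avoiding the origin, then for every domain `Ω` with `0 ∉ Ω`,
`∑_{p ∈ Ω_lat} f(p) ≤ (8/C₂) ∫_Ω f dx`, where `Ω_lat` is the set of lattice points contained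
in some integer unit cube lying in `Ω` and avoiding the origin. -/
theorem lattice_sum_le_integral (f : ℝ × ℝ × ℝ → ℝ)
    (hcont : ContinuousOn f {(0 : ℝ × ℝ × ℝ)}ᶜ)
    (hpos : ∀ x : ℝ × ℝ × ℝ, x ≠ 0 → 0 < f x)
    (C₂ : ℝ) (hC₂ : 0 < C₂)
    (hreg : ∀ i j k : ℤ, (0 : ℝ × ℝ × ℝ) ∉ unitCube i j k →
      ∀ x ∈ unitCube i j k, ∀ y ∈ unitCube i j k, C₂ * f x ≤ f y)
    (Ω : Set (ℝ × ℝ × ℝ)) (hΩopen : IsOpen Ω) (hΩconn : IsConnected Ω)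
    (h0 : (0 : ℝ × ℝ × ℝ) ∉ Ω) :
    (∑' p : {p : ℤ × ℤ × ℤ // ∃ I J K : ℤ,
        (((p.1 : ℝ), (p.2.1 : ℝ), (p.2.2 : ℝ)) ∈ unitCube I J K ∧
          unitCube I J K ⊆ Ω ∧ (0 : ℝ × ℝ × ℝ) ∉ unitCube I J K)},
        ENNReal.ofReal (f (((p : ℤ × ℤ × ℤ).1 : ℝ), ((p : ℤ × ℤ × ℤ).2.1 : ℝ),
          ((p : ℤ × ℤ × ℤ).2.2 : ℝ)))) ≤
      ENNReal.ofReal (8 / C₂) * ∫⁻ x in Ω, ENNReal.ofReal (f x) := by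
  classical
  set ι := {p : ℤ × ℤ × ℤ // ∃ I J K : ℤ,
      (((p.1 : ℝ), (p.2.1 : ℝ), (p.2.2 : ℝ)) ∈ unitCube I J K ∧
        unitCube I J K ⊆ Ω ∧ (0 : ℝ × ℝ × ℝ) ∉ unitCube I J K)} with hι
  -- the lattice point as a real vector
  set pr : ι → ℝ × ℝ × ℝ := fun p =>
    (((p : ℤ × ℤ × ℤ).1 : ℝ), ((p : ℤ × ℤ × ℤ).2.1 : ℝ), ((p : ℤ × ℤ × ℤ).2.2 : ℝ)) with hpr
  have hsel : ∀ p : ι, ∃ I J K : ℤ, pr p ∈ unitCube I J K ∧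
      unitCube I J K ⊆ Ω ∧ (0 : ℝ × ℝ × ℝ) ∉ unitCube I J K := fun p => p.2
  choose I J K hmem hsub hnz using hsel
  -- the half-cube around the lattice point
  set B : ι → Set (ℝ × ℝ × ℝ) := fun p =>
    Icc (((p : ℤ × ℤ × ℤ).1 : ℝ) - 1/2) (((p : ℤ × ℤ × ℤ).1 : ℝ) + 1/2) ×ˢ
      (Icc (((p : ℤ × ℤ × ℤ).2.1 : ℝ) - 1/2) (((p : ℤ × ℤ × ℤ).2.1 : ℝ) + 1/2) ×ˢ
        Icc (((p : ℤ × ℤ × ℤ).2.2 : ℝ) - 1/2) (((p : ℤ × ℤ × ℤ).2.2 : ℝ) + 1/2)) with hB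
  set S : ι → Set (ℝ × ℝ × ℝ) := fun p => unitCube (I p) (J p) (K p) ∩ B p with hS
  have hSmeas : ∀ p : ι, MeasurableSet (S p) := by
    intro p
    apply MeasurableSet.inter
    · rw [unitCube_eq]
      exact measurableSet_Icc.prod (measurableSet_Icc.prod measurableSet_Icc)
    · exact measurableSet_Icc.prod (measurableSet_Icc.prod measurableSet_Icc)
  -- coordinates of hmem
  have hmem' : ∀ p : ι,
      ((I p : ℝ) ≤ ((p : ℤ × ℤ × ℤ).1 : ℝ) ∧ ((p : ℤ × ℤ × ℤ).1 : ℝ) ≤ (I p : ℝ) + 1) ∧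
      ((J p : ℝ) ≤ ((p : ℤ × ℤ × ℤ).2.1 : ℝ) ∧ ((p : ℤ × ℤ × ℤ).2.1 : ℝ) ≤ (J p : ℝ) + 1) ∧
      ((K p : ℝ) ≤ ((p : ℤ × ℤ × ℤ).2.2 : ℝ) ∧ ((p : ℤ × ℤ × ℤ).2.2 : ℝ) ≤ (K p : ℝ) + 1) := by
    intro p
    have h := hmem p
    rw [unitCube, Set.mem_Icc] at h
    obtain ⟨h1, h2⟩ := h
    rw [Prod.le_def, Prod.le_def] at h1 h2
    exact ⟨⟨h1.1, h2.1⟩, ⟨h1.2.1, h2.2.1⟩, ⟨h1.2.2, h2.2.2⟩⟩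
  -- volume of each `S p` is 1/8
  have hSvol : ∀ p : ι, volume (S p) = ENNReal.ofReal (1/8) := by
    intro p
    obtain ⟨⟨hi1, hi2⟩, ⟨hj1, hj2⟩, ⟨hk1, hk2⟩⟩ := hmem' p
    rw [hS]
    simp only
    rw [unitCube_eq, hB]
    simp only
    rw [Set.prod_inter_prod, Set.prod_inter_prod, vol_prod3,
      oneD_half _ _ hi1 hi2, oneD_half _ _ hj1 hj2, oneD_half _ _ hk1 hk2,
      ← ENNReal.ofReal_mul (by norm_num), ← ENNReal.ofReal_mul (by norm_num)]
    norm_num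
  -- pairwise a.e. disjointness
  have hdisj : Pairwise (Function.onFun (MeasureTheory.AEDisjoint volume) S) := by
    intro p q hpq
    have hne : (p : ℤ × ℤ × ℤ) ≠ (q : ℤ × ℤ × ℤ) := fun h => hpq (Subtype.ext h)
    have hsubBB : S p ∩ S q ⊆ B p ∩ B q := fun x hx => ⟨hx.1.2, hx.2.2⟩
    refine measure_mono_null hsubBB ?_
    rw [hB]
    simp only
    rw [Set.prod_inter_prod, Set.prod_inter_prod, vol_prod3]
    have hcoord : (p : ℤ × ℤ × ℤ).1 ≠ (q : ℤ × ℤ × ℤ).1 ∨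
        (p : ℤ × ℤ × ℤ).2.1 ≠ (q : ℤ × ℤ × ℤ).2.1 ∨
        (p : ℤ × ℤ × ℤ).2.2 ≠ (q : ℤ × ℤ × ℤ).2.2 := by
      by_contra hc
      push_neg at hc
      exact hne (Prod.ext hc.1 (Prod.ext hc.2.1 hc.2.2))
    rcases hcoord with h | h | h
    · rw [oneD_zero _ _ h, zero_mul]
    · rw [oneD_zero _ _ h, zero_mul, mul_zero]
    · rw [oneD_zero _ _ h, mul_zero, mul_zero]
  -- key pointwise estimate
  have key : ∀ p : ι, ENNReal.ofReal (f (pr p)) ≤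
      ENNReal.ofReal (8 / C₂) * ∫⁻ x in S p, ENNReal.ofReal (f x) := by
    intro p
    have hprne : pr p ≠ 0 := by
      intro h
      exact hnz p (h ▸ hmem p)
    have hfp : 0 < f (pr p) := hpos _ hprne
    have hlow : ENNReal.ofReal (C₂ * f (pr p)) * volume (S p) ≤
        ∫⁻ x in S p, ENNReal.ofReal (f x) := by
      have := MeasureTheory.setLIntegral_const (μ := volume) (S p) (ENNReal.ofReal (C₂ * f (pr p)))
      rw [← this]
      refine MeasureTheory.setLIntegral_mono' (hSmeas p) (fun x hx => ?_)
      exact ENNReal.ofReal_le_ofReal (hreg (I p) (J p) (K p) (hnz p) (pr p) (hmem p) x hx.1)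
    calc ENNReal.ofReal (f (pr p))
        = ENNReal.ofReal (8 / C₂) * (ENNReal.ofReal (C₂ * f (pr p)) * ENNReal.ofReal (1/8)) := by
          rw [← ENNReal.ofReal_mul (by positivity), ← ENNReal.ofReal_mul (by positivity)]
          congr 1
          field_simp
      _ = ENNReal.ofReal (8 / C₂) * (ENNReal.ofReal (C₂ * f (pr p)) * volume (S p)) := by
          rw [hSvol p]
      _ ≤ ENNReal.ofReal (8 / C₂) * ∫⁻ x in S p, ENNReal.ofReal (f x) :=
          mul_le_mul_right hlow _
  -- union bound
  have hU : (⋃ p : ι, S p) ⊆ Ω := by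
    intro x hx
    obtain ⟨p, hp⟩ := Set.mem_iUnion.mp hx
    exact hsub p hp.1
  calc (∑' p : ι, ENNReal.ofReal (f (pr p)))
      ≤ ∑' p : ι, ENNReal.ofReal (8 / C₂) * ∫⁻ x in S p, ENNReal.ofReal (f x) :=
        ENNReal.tsum_le_tsum key
    _ = ENNReal.ofReal (8 / C₂) * ∑' p : ι, ∫⁻ x in S p, ENNReal.ofReal (f x) :=
        ENNReal.tsum_mul_left
    _ = ENNReal.ofReal (8 / C₂) * ∫⁻ x in ⋃ p : ι, S p, ENNReal.ofReal (f x) := by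
        rw [MeasureTheory.lintegral_iUnion₀ (fun p => (hSmeas p).nullMeasurableSet) hdisj]
    _ ≤ ENNReal.ofReal (8 / C₂) * ∫⁻ x in Ω, ENNReal.ofReal (f x) :=
        mul_le_mul_right (MeasureTheory.lintegral_mono_set hU) _
end

section
/- For every real s > -3/2 there is a constant C_s > 0 (depending only on s) such that for all a ∈ ℝ and all n ∈ ℕ with n ≥ 1, ∑_{(i,j,k) ∈ ℤ³ \ {0}, i²+j²+k² ≤ n} (a² + i² + j² + k²)^s ≤ C_s (a² + n)^{s + 3/2}. -/
open scoped BigOperators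

private lemma sum_rpow_aux (t : ℝ) (ht : -1 < t) :
    ∃ C > 0, ∀ R : ℕ, 1 ≤ R → ∑ M ∈ Finset.Icc 1 R, (M : ℝ) ^ t ≤ C * (R : ℝ) ^ (t + 1) := by
  have ht1 : 0 < t + 1 := by linarith
  refine ⟨1 + 1 / (t + 1), by positivity, fun R hR => ?_⟩
  have hR1 : (1 : ℝ) ≤ R := by exact_mod_cast hR
  have hRt : (1 : ℝ) ≤ (R : ℝ) ^ (t + 1) := Real.one_le_rpow hR1 ht1.le
  rcases le_or_gt 0 t with ht0 | ht0
  · calc ∑ M ∈ Finset.Icc 1 R, (M : ℝ) ^ t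
        ≤ ∑ M ∈ Finset.Icc 1 R, (R : ℝ) ^ t := by
          refine Finset.sum_le_sum fun M hM => ?_
          have : (M : ℝ) ≤ R := by exact_mod_cast (Finset.mem_Icc.mp hM).2
          exact Real.rpow_le_rpow (by positivity) this ht0
      _ = (R : ℝ) * (R : ℝ) ^ t := by
          rw [Finset.sum_const, Nat.card_Icc]
          simp [nsmul_eq_mul]
      _ = (R : ℝ) ^ (t + 1) := by
          rw [Real.rpow_add (by positivity), Real.rpow_one]; ring
      _ ≤ (1 + 1 / (t + 1)) * (R : ℝ) ^ (t + 1) := by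
          nlinarith [one_div_pos.mpr ht1]
  · -- t < 0
    have hsum2 : ∑ M ∈ Finset.Icc 2 R, (M : ℝ) ^ t ≤ ((R : ℝ) ^ (t + 1) - 1) / (t + 1) := by
      have hanti : AntitoneOn (fun x : ℝ => x ^ t) (Set.Icc (1 : ℝ) (1 + (R - 1 : ℕ))) := by
        intro x hx y hy hxy
        exact Real.rpow_le_rpow_of_nonpos (lt_of_lt_of_le one_pos hx.1) hxy ht0.le
      have key := hanti.sum_le_integral
      have hcast : ((R - 1 : ℕ) : ℝ) = (R : ℝ) - 1 := by
        push_cast [hR]; ring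
      have hint : (∫ x in (1:ℝ)..(1 + (R - 1 : ℕ)), x ^ t) = ((R:ℝ) ^ (t+1) - 1) / (t+1) := by
        rw [integral_rpow (Or.inl ht)]
        rw [hcast, Real.one_rpow]
        ring_nf
      rw [hint] at key
      refine le_trans (le_of_eq ?_) key
      have : Finset.Icc 2 R = Finset.Ico 2 (R+1) := by
        ext m; simp [Finset.mem_Icc, Finset.mem_Ico]
      rw [this, Finset.sum_Ico_eq_sum_range]
      have hR2 : R + 1 - 2 = R - 1 := by omega
      rw [hR2]
      refine Finset.sum_congr rfl fun i _ => ?_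
      push_cast; ring_nf
    have hsplit : ∑ M ∈ Finset.Icc 1 R, (M : ℝ) ^ t
        = 1 + ∑ M ∈ Finset.Icc 2 R, (M : ℝ) ^ t := by
      have : Finset.Icc 1 R = insert 1 (Finset.Icc 2 R) := by
        ext m; simp [Finset.mem_Icc, Finset.mem_insert]; omega
      rw [this, Finset.sum_insert (by simp)]
      simp
    rw [hsplit]
    calc 1 + ∑ M ∈ Finset.Icc 2 R, (M : ℝ) ^ t
        ≤ 1 + ((R : ℝ) ^ (t + 1) - 1) / (t + 1) := by linarith
      _ ≤ (R : ℝ) ^ (t + 1) + (R : ℝ) ^ (t + 1) / (t + 1) := by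
          have : ((R : ℝ) ^ (t + 1) - 1) / (t + 1) ≤ (R : ℝ) ^ (t + 1) / (t + 1) := by
            gcongr; linarith
          linarith
      _ = (1 + 1 / (t + 1)) * (R : ℝ) ^ (t + 1) := by field_simp

private noncomputable def latCube (m : ℕ) : Finset (ℤ × ℤ × ℤ) :=
  Finset.Icc (-(m:ℤ)) m ×ˢ Finset.Icc (-(m:ℤ)) m ×ˢ Finset.Icc (-(m:ℤ)) m

private def msup (p : ℤ × ℤ × ℤ) : ℕ :=
  max p.1.natAbs (max p.2.1.natAbs p.2.2.natAbs)

private lemma mem_latCube {p : ℤ × ℤ × ℤ} {m : ℕ} : p ∈ latCube m ↔ msup p ≤ m := by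
  simp only [latCube, Finset.mem_product, Finset.mem_Icc, msup, max_le_iff]
  omega

private lemma card_latCube (m : ℕ) : (latCube m).card = (2 * m + 1) ^ 3 := by
  have h : (Finset.Icc (-(m:ℤ)) m).card = 2 * m + 1 := by
    rw [Int.card_Icc]; omega
  simp only [latCube, Finset.card_product, h]; ring

private lemma msup_sq_le (p : ℤ × ℤ × ℤ) :
    ((msup p : ℤ)) ^ 2 ≤ p.1 ^ 2 + p.2.1 ^ 2 + p.2.2 ^ 2 := by
  have h1 : ((p.1.natAbs : ℤ)) ^ 2 = p.1 ^ 2 := by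
    rw [Int.natCast_natAbs, sq_abs]
  have h2 : ((p.2.1.natAbs : ℤ)) ^ 2 = p.2.1 ^ 2 := by
    rw [Int.natCast_natAbs, sq_abs]
  have h3 : ((p.2.2.natAbs : ℤ)) ^ 2 = p.2.2 ^ 2 := by
    rw [Int.natCast_natAbs, sq_abs]
  have hm : msup p = p.1.natAbs ∨ msup p = p.2.1.natAbs ∨ msup p = p.2.2.natAbs := by
    unfold msup
    rcases max_choice p.1.natAbs (max p.2.1.natAbs p.2.2.natAbs) with h | h
    · exact Or.inl h
    · rcases max_choice p.2.1.natAbs p.2.2.natAbs with h' | h' <;> rw [h, h']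
      · exact Or.inr (Or.inl rfl)
      · exact Or.inr (Or.inr rfl)
  rcases hm with h | h | h <;> rw [h] <;>
    nlinarith [sq_nonneg p.1, sq_nonneg p.2.1, sq_nonneg p.2.2, h1, h2, h3]

private lemma one_le_msup {p : ℤ × ℤ × ℤ} (hp : p ≠ 0) : 1 ≤ msup p := by
  by_contra h
  push_neg at h
  interval_cases hM : msup p
  unfold msup at hM
  simp only [Nat.max_eq_zero_iff, Int.natAbs_eq_zero] at hM
  exact hp (by ext <;> simp [hM.1, hM.2.1, hM.2.2])

private lemma shell_card {M : ℕ} (hM : 1 ≤ M) :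
    ((latCube M) \ (latCube (M - 1))).card ≤ 26 * M ^ 2 := by
  have hsub : latCube (M - 1) ⊆ latCube M := by
    intro p hp; rw [mem_latCube] at hp ⊢; omega
  rw [Finset.card_sdiff_of_subset hsub, card_latCube, card_latCube]
  obtain ⟨K, rfl⟩ : ∃ K, M = K + 1 := ⟨M - 1, by omega⟩
  have h1 : (K + 1) - 1 = K := by omega
  rw [h1]
  have : 2 * (K + 1) + 1 = 2 * K + 3 := by ring
  rw [this]
  rw [Nat.sub_le_iff_le_add]
  nlinarith [sq_nonneg K]

/-- For every `s > -3/2` there is `C_s > 0` such that for all `a ∈ ℝ` and all `n ≥ 1`,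
`∑_{(i,j,k) ∈ ℤ³ \ {0}, i²+j²+k² ≤ n} (a² + i² + j² + k²)^s ≤ C_s (a² + n)^{s + 3/2}`. -/
theorem lattice_ball_sum_le (s : ℝ) (hs : -(3 / 2) < s) :
    ∃ C > 0, ∀ (a : ℝ) (n : ℕ), 1 ≤ n →
      (∑' p : {p : ℤ × ℤ × ℤ //
          p ≠ 0 ∧ p.1 ^ 2 + p.2.1 ^ 2 + p.2.2 ^ 2 ≤ (n : ℤ)},
          (a ^ 2 + ((p : ℤ × ℤ × ℤ).1 : ℝ) ^ 2 + ((p : ℤ × ℤ × ℤ).2.1 : ℝ) ^ 2 +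
            ((p : ℤ × ℤ × ℤ).2.2 : ℝ) ^ 2) ^ s) ≤
        C * (a ^ 2 + (n : ℝ)) ^ (s + 3 / 2) := by
  obtain ⟨C₁, hC₁, hC₁sum⟩ := sum_rpow_aux (2 * s + 2) (by linarith)
  refine ⟨27 + 26 * C₁, by positivity, fun a n hn => ?_⟩
  set g : ℤ × ℤ × ℤ → ℝ :=
    fun p => (a ^ 2 + (p.1 : ℝ) ^ 2 + (p.2.1 : ℝ) ^ 2 + (p.2.2 : ℝ) ^ 2) ^ s with hg
  set R := Nat.sqrt n with hRdef
  have hR1 : 1 ≤ R := Nat.sqrt_pos.mpr hn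
  set T : Finset (ℤ × ℤ × ℤ) :=
    (latCube R).filter (fun p => p ≠ 0 ∧ p.1 ^ 2 + p.2.1 ^ 2 + p.2.2 ^ 2 ≤ (n : ℤ)) with hT
  -- membership characterization
  have he : ∀ p : ℤ × ℤ × ℤ, p ∈ T ↔
      (p ≠ 0 ∧ p.1 ^ 2 + p.2.1 ^ 2 + p.2.2 ^ 2 ≤ (n : ℤ)) := by
    intro p
    rw [hT, Finset.mem_filter, mem_latCube]
    constructor
    · exact fun h => h.2
    · intro h
      refine ⟨?_, h⟩
      rw [Nat.le_sqrt]
      have := msup_sq_le p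
      have : ((msup p : ℤ)) ^ 2 ≤ (n : ℤ) := le_trans this h.2
      have : ((msup p * msup p : ℕ) : ℤ) ≤ (n : ℤ) := by push_cast; nlinarith
      exact_mod_cast this
  -- tsum equals finite sum
  have htsum : (∑' p : {p : ℤ × ℤ × ℤ //
        p ≠ 0 ∧ p.1 ^ 2 + p.2.1 ^ 2 + p.2.2 ^ 2 ≤ (n : ℤ)}, g ↑p) = ∑ p ∈ T, g p := by
    calc (∑' p : {p : ℤ × ℤ × ℤ //
          p ≠ 0 ∧ p.1 ^ 2 + p.2.1 ^ 2 + p.2.2 ^ 2 ≤ (n : ℤ)}, g ↑p)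
        = ∑' p : {p : ℤ × ℤ × ℤ // p ∈ T}, g ↑p :=
          ((Equiv.subtypeEquivRight he).tsum_eq
            (fun p : {p : ℤ × ℤ × ℤ //
              p ≠ 0 ∧ p.1 ^ 2 + p.2.1 ^ 2 + p.2.2 ^ 2 ≤ (n : ℤ)} => g ↑p)).symm
      _ = ∑ p ∈ T, g p := Finset.tsum_subtype T g
  rw [show (∑' p : {p : ℤ × ℤ × ℤ //
        p ≠ 0 ∧ p.1 ^ 2 + p.2.1 ^ 2 + p.2.2 ^ 2 ≤ (n : ℤ)},
        (a ^ 2 + ((p : ℤ × ℤ × ℤ).1 : ℝ) ^ 2 + ((p : ℤ × ℤ × ℤ).2.1 : ℝ) ^ 2 +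
          ((p : ℤ × ℤ × ℤ).2.2 : ℝ) ^ 2) ^ s) = ∑ p ∈ T, g p from htsum]
  -- basic facts about the base
  have hb0 : (0:ℝ) < a ^ 2 + n := by
    have : (1:ℝ) ≤ (n:ℝ) := by exact_mod_cast hn
    nlinarith [sq_nonneg a]
  have hbn : (n : ℝ) ≤ a ^ 2 + n := by nlinarith [sq_nonneg a]
  have hn0 : (0:ℝ) < (n:ℝ) := by exact_mod_cast hn
  have hRn : (R : ℝ) ≤ (n : ℝ) ^ ((1:ℝ)/2) := by
    rw [← Real.sqrt_eq_rpow]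
    rw [Real.le_sqrt (by positivity)]
    · have h : R ^ 2 ≤ n := Nat.sqrt_le' n
      exact_mod_cast h
    · exact hn0.le
  rcases le_or_gt 0 s with hs0 | hs0
  · -- case 0 ≤ s
    have hterm : ∀ p ∈ T, g p ≤ (a ^ 2 + n) ^ s := by
      intro p hp
      obtain ⟨-, hle⟩ := (he p).mp hp
      have hle' : (p.1 : ℝ) ^ 2 + (p.2.1 : ℝ) ^ 2 + (p.2.2 : ℝ) ^ 2 ≤ (n : ℝ) := by
        exact_mod_cast hle
      exact Real.rpow_le_rpow (by positivity) (by linarith) hs0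
    have hcard : (T.card : ℝ) ≤ 27 * (R : ℝ) ^ (3:ℕ) := by
      have h1 : T.card ≤ (latCube R).card := Finset.card_filter_le _ _
      have h2 : (latCube R).card ≤ 27 * R ^ 3 := by
        rw [card_latCube]
        calc (2 * R + 1) ^ 3 ≤ (3 * R) ^ 3 := Nat.pow_le_pow_left (by omega) 3
          _ = 27 * R ^ 3 := by ring
      have := le_trans h1 h2
      exact_mod_cast this
    have hR3 : (R : ℝ) ^ (3:ℕ) ≤ (a ^ 2 + n) ^ ((3:ℝ)/2) := by
      calc (R : ℝ) ^ (3:ℕ) ≤ ((n : ℝ) ^ ((1:ℝ)/2)) ^ (3:ℕ) := by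
            gcongr
        _ = (n : ℝ) ^ ((3:ℝ)/2) := by
            rw [← Real.rpow_natCast ((n : ℝ) ^ ((1:ℝ)/2)) 3, ← Real.rpow_mul (le_of_lt hn0)]
            norm_num
        _ ≤ (a ^ 2 + n) ^ ((3:ℝ)/2) := Real.rpow_le_rpow (le_of_lt hn0) hbn (by norm_num)
    calc ∑ p ∈ T, g p ≤ ∑ _p ∈ T, (a ^ 2 + n) ^ s := Finset.sum_le_sum hterm
      _ = (T.card : ℝ) * (a ^ 2 + n) ^ s := by rw [Finset.sum_const, nsmul_eq_mul]
      _ ≤ 27 * (R : ℝ) ^ (3:ℕ) * (a ^ 2 + n) ^ s := by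
          apply mul_le_mul_of_nonneg_right hcard (Real.rpow_nonneg hb0.le s)
      _ ≤ 27 * ((a ^ 2 + n) ^ ((3:ℝ)/2)) * (a ^ 2 + n) ^ s := by
          apply mul_le_mul_of_nonneg_right _ (Real.rpow_nonneg hb0.le s)
          nlinarith [hR3]
      _ = 27 * (a ^ 2 + n) ^ (s + 3/2) := by
          rw [mul_assoc, ← Real.rpow_add hb0]; ring_nf
      _ ≤ (27 + 26 * C₁) * (a ^ 2 + n) ^ (s + 3/2) := by
          have := Real.rpow_nonneg hb0.le (s + 3/2)
          nlinarith
  · -- case s < 0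
    have hmaps : ∀ p ∈ T, msup p ∈ Finset.Icc 1 R := by
      intro p hp
      obtain ⟨hp0, hle⟩ := (he p).mp hp
      rw [Finset.mem_Icc]
      refine ⟨one_le_msup hp0, ?_⟩
      have := (he p).mp hp
      have hmem : p ∈ latCube R := (Finset.mem_filter.mp hp).1
      exact mem_latCube.mp hmem
    rw [← Finset.sum_fiberwise_of_maps_to hmaps g]
    have hinner : ∀ M ∈ Finset.Icc 1 R,
        (∑ p ∈ T.filter (fun p => msup p = M), g p) ≤ 26 * (M:ℝ) ^ (2*s+2) := by
      intro M hM
      obtain ⟨hM1, hMR⟩ := Finset.mem_Icc.mp hM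
      have hM0 : (0:ℝ) < (M:ℝ) := by exact_mod_cast hM1
      have hterm : ∀ p ∈ T.filter (fun p => msup p = M), g p ≤ (M:ℝ) ^ (2*s) := by
        intro p hp
        obtain ⟨hpT, hpM⟩ := Finset.mem_filter.mp hp
        have hsq : ((M:ℝ)) ^ 2 ≤ a ^ 2 + (p.1 : ℝ) ^ 2 + (p.2.1 : ℝ) ^ 2 + (p.2.2 : ℝ) ^ 2 := by
          have h := msup_sq_le p
          rw [hpM] at h
          have h' : ((M:ℝ)) ^ 2 ≤ (p.1 : ℝ) ^ 2 + (p.2.1 : ℝ) ^ 2 + (p.2.2 : ℝ) ^ 2 := by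
            exact_mod_cast h
          nlinarith [sq_nonneg a]
        calc g p ≤ ((M:ℝ) ^ 2) ^ s :=
              Real.rpow_le_rpow_of_nonpos (by positivity) hsq hs0.le
          _ = (M:ℝ) ^ (2*s) := by
              rw [← Real.rpow_natCast (M:ℝ) 2, ← Real.rpow_mul hM0.le]
              norm_num
      have hfibcard : ((T.filter (fun p => msup p = M)).card : ℝ) ≤ 26 * (M:ℝ) ^ (2:ℕ) := by
        have hsub : T.filter (fun p => msup p = M) ⊆ (latCube M) \ (latCube (M-1)) := by
          intro p hp
          obtain ⟨hpT, hpM⟩ := Finset.mem_filter.mp hp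
          rw [Finset.mem_sdiff, mem_latCube, mem_latCube, hpM]
          omega
        have := le_trans (Finset.card_le_card hsub) (shell_card hM1)
        exact_mod_cast this
      calc (∑ p ∈ T.filter (fun p => msup p = M), g p)
          ≤ ((T.filter (fun p => msup p = M)).card : ℝ) * (M:ℝ) ^ (2*s) := by
            rw [← nsmul_eq_mul]
            exact Finset.sum_le_card_nsmul _ _ _ hterm
        _ ≤ 26 * (M:ℝ) ^ (2:ℕ) * (M:ℝ) ^ (2*s) := by
            apply mul_le_mul_of_nonneg_right hfibcard (Real.rpow_nonneg hM0.le _)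
        _ = 26 * (M:ℝ) ^ (2*s+2) := by
            rw [mul_assoc, ← Real.rpow_natCast (M:ℝ) 2, ← Real.rpow_add hM0]
            norm_num; ring_nf
    calc (∑ M ∈ Finset.Icc 1 R, ∑ p ∈ T.filter (fun p => msup p = M), g p)
        ≤ ∑ M ∈ Finset.Icc 1 R, 26 * (M:ℝ) ^ (2*s+2) := Finset.sum_le_sum hinner
      _ = 26 * ∑ M ∈ Finset.Icc 1 R, (M:ℝ) ^ (2*s+2) := by rw [Finset.mul_sum]
      _ ≤ 26 * (C₁ * (R:ℝ) ^ (2*s+2+1)) := by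
          have := hC₁sum R hR1
          linarith
      _ ≤ 26 * C₁ * (a ^ 2 + n) ^ (s + 3/2) := by
          rw [← mul_assoc]
          apply mul_le_mul_of_nonneg_left _ (by positivity : (0:ℝ) ≤ 26 * C₁)
          calc (R:ℝ) ^ (2*s+2+1) ≤ ((n:ℝ) ^ ((1:ℝ)/2)) ^ (2*s+3) := by
                rw [show 2*s+2+1 = 2*s+3 by ring]
                exact Real.rpow_le_rpow (by positivity) hRn (by linarith)
            _ = (n:ℝ) ^ (s + 3/2) := by
                rw [← Real.rpow_mul hn0.le]; norm_num; ring_nf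
            _ ≤ (a ^ 2 + n) ^ (s + 3/2) :=
                Real.rpow_le_rpow hn0.le hbn (by linarith)
      _ ≤ (27 + 26 * C₁) * (a ^ 2 + n) ^ (s + 3/2) := by
          have := Real.rpow_nonneg hb0.le (s + 3/2)
          nlinarith
end

section
/- Let s > 3/2 and a ∈ ℝ. Then the family ( (a² + i² + j² + k²)^{-s} )_{(i,j,k) ∈ ℤ³ \ {0}} is summable, and there is a constant C_s > 0 (depending only on s) such that ∑_{(i,j,k) ∈ ℤ³ \ {0}} (a² + i² + j² + k²)^{-s} ≤ C_s / (a² + 1)^{s - 3/2}. In particular, the alternating series ∑'_{(i,j,k)∈ℤ³} (-1)^{i+j+k} (a²+i²+j²+k²)^{-s} converges absolutely for s > 3/2, and its sum tends to 0 as a → ∞. -/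
set_option maxHeartbeats 2000000

open Real Filter

open scoped BigOperators

lemma aux_summable_nat {t : ℝ} (ht : 1/2 < t) :
    Summable (fun n : ℕ => ((1:ℝ) + (n:ℝ)^2) ^ (-t)) := by
  rw [← summable_nat_add_iff 1]
  have h : Summable (fun n : ℕ => ((n:ℝ)+1) ^ (-(2*t))) := by
    have := (Real.summable_nat_rpow.mpr (by linarith : -(2*t) < -1)).comp_injective
      (add_left_injective 1)
    simpa [Function.comp_def, Nat.cast_add] using this
  apply h.of_nonneg_of_le (fun n => Real.rpow_nonneg (by positivity) _)
  intro n
  push_cast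
  calc ((1:ℝ)+((n:ℝ)+1)^2)^(-t) ≤ (((n:ℝ)+1)^2)^(-t) :=
        Real.rpow_le_rpow_of_nonpos (by positivity) (by linarith) (by linarith)
    _ = ((n:ℝ)+1)^(-(2*t)) := by
        rw [← Real.rpow_natCast ((n:ℝ)+1) 2, ← Real.rpow_mul (by positivity)]
        norm_num

lemma aux_summable_int {t : ℝ} (ht : 1/2 < t) :
    Summable (fun q : ℤ => ((1:ℝ) + (q:ℝ)^2) ^ (-t)) := by
  apply Summable.of_nat_of_neg_add_one
  · simpa using aux_summable_nat ht
  · have h := (summable_nat_add_iff 1).mpr (aux_summable_nat ht)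
    refine h.congr fun n => ?_
    push_cast
    ring_nf

lemma oneD {t : ℝ} (ht : 1/2 < t) :
    ∃ D > 0, ∀ b : ℝ, 1 ≤ b →
      Summable (fun i : ℤ => (b^2 + (i:ℝ)^2) ^ (-t)) ∧
      ∑' i : ℤ, (b^2 + (i:ℝ)^2) ^ (-t) ≤ D * (b^2) ^ ((1:ℝ)/2 - t) := by
  have hGsum := aux_summable_int ht
  set G := ∑' q : ℤ, ((1:ℝ) + (q:ℝ)^2) ^ (-t) with hGdef
  have hG1 : (1:ℝ) ≤ G := by
    have := Summable.le_tsum hGsum 0 (fun i _ => Real.rpow_nonneg (by positivity) _)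
    simpa using this
  -- shifted family
  have hshift : Summable (fun q : ℤ => ((1:ℝ) + ((q:ℝ)+1)^2) ^ (-t)) := by
    refine (((Equiv.addRight (1:ℤ)).summable_iff.mpr hGsum).congr fun q => ?_)
    simp only [Function.comp_apply, Equiv.coe_addRight]
    push_cast
    ring_nf
  have hshift_tsum : ∑' q : ℤ, ((1:ℝ) + ((q:ℝ)+1)^2) ^ (-t) = G := by
    rw [hGdef, ← Equiv.tsum_eq (Equiv.addRight (1:ℤ)) (fun q : ℤ => ((1:ℝ)+(q:ℝ)^2)^(-t))]
    refine tsum_congr fun q => ?_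
    simp only [Equiv.coe_addRight]
    push_cast
    ring_nf
  set g : ℤ → ℝ := fun q => ((1:ℝ) + (q:ℝ)^2) ^ (-t) + ((1:ℝ) + ((q:ℝ)+1)^2) ^ (-t) with hgdef
  have hgsum : Summable g := hGsum.add hshift
  have hgnonneg : ∀ q, 0 ≤ g q := fun q =>
    add_nonneg (Real.rpow_nonneg (by positivity) _) (Real.rpow_nonneg (by positivity) _)
  have hgtsum : ∑' q, g q = 2 * G := by
    rw [hgdef, Summable.tsum_add hGsum hshift, hshift_tsum, ← hGdef]; ring
  refine ⟨4*G, by linarith, fun b hb => ?_⟩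
  have hb0 : (0:ℝ) < b := by linarith
  have hsum : Summable (fun i : ℤ => (b^2 + (i:ℝ)^2) ^ (-t)) := by
    refine hGsum.of_nonneg_of_le (fun i => Real.rpow_nonneg (by positivity) _) fun i => ?_
    exact Real.rpow_le_rpow_of_nonpos (by positivity) (by nlinarith) (by linarith)
  refine ⟨hsum, ?_⟩
  set B : ℕ := ⌈b⌉₊ with hBdef
  have hB1 : 1 ≤ B := Nat.one_le_ceil_iff.mpr hb0
  haveI : NeZero B := ⟨by omega⟩
  have hbB : b ≤ (B:ℝ) := Nat.le_ceil b
  have hBle : (B:ℝ) ≤ 2*b := by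
    have := Nat.ceil_lt_add_one hb0.le
    rw [← hBdef] at this
    linarith
  -- majorant on the product
  set M : ℤ × Fin B → ℝ := fun p => (b^2)^(-t) * g p.1 with hMdef
  have hMsum : Summable M := by
    have h1 : Summable (fun q : ℤ => (b^2)^(-t) * g q) := hgsum.mul_left _
    have h2 : Summable (fun _ : Fin B => (1:ℝ)) := Summable.of_finite
    have h3 := h1.mul_of_nonneg h2 (fun q => mul_nonneg (Real.rpow_nonneg (by positivity) _)
      (hgnonneg q)) (fun _ => zero_le_one)
    simpa [hMdef] using h3
  -- pointwise bound
  have key : ∀ p : ℤ × Fin B,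
      (b^2 + (((Int.divModEquiv B).symm p : ℤ):ℝ)^2) ^ (-t) ≤ M p := by
    rintro ⟨q, r⟩
    have hx : (((Int.divModEquiv B).symm (q, r) : ℤ):ℝ) = (q:ℝ) * B + (r:ℕ) := by
      simp only [Int.divModEquiv_symm_apply]
      push_cast
      ring
    rw [hx]
    have hr0 : (0:ℝ) ≤ ((r:ℕ):ℝ) := by positivity
    have hr1 : ((r:ℕ):ℝ) + 1 ≤ (B:ℝ) := by
      have := r.is_lt
      exact_mod_cast Nat.succ_le_of_lt this
    have hbBpos : (0:ℝ) < B := lt_of_lt_of_le hb0 hbB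
    rcases le_or_gt 0 (q:ℝ) with hq | hq
    · have hxx : b^2 * (1 + (q:ℝ)^2) ≤ b^2 + ((q:ℝ)*B + (r:ℕ))^2 := by
        nlinarith [mul_nonneg hq hb0.le, mul_nonneg hq (sub_nonneg.mpr hbB),
          mul_nonneg (mul_nonneg hq hb0.le) (mul_nonneg hq (sub_nonneg.mpr hbB))]
      calc (b^2 + ((q:ℝ)*B + (r:ℕ))^2) ^ (-t)
          ≤ (b^2 * (1 + (q:ℝ)^2)) ^ (-t) :=
            Real.rpow_le_rpow_of_nonpos (by positivity) hxx (by linarith)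
        _ = (b^2)^(-t) * ((1 + (q:ℝ)^2))^(-t) := Real.mul_rpow (by positivity) (by positivity)
        _ ≤ M (q, r) := by
            rw [hMdef]
            refine mul_le_mul_of_nonneg_left ?_ (Real.rpow_nonneg (by positivity) _)
            exact le_add_of_nonneg_right (Real.rpow_nonneg (by positivity) _)
    · have hq1 : (q:ℝ) + 1 ≤ 0 := by
        have : q < 0 := by exact_mod_cast hq
        have : q ≤ -1 := by omega
        have : (q:ℝ) ≤ -1 := by exact_mod_cast this
        linarith
      have hx1 : (q:ℝ)*B + (r:ℕ) ≤ ((q:ℝ)+1)*b := by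
        nlinarith [mul_nonneg (neg_nonneg.mpr hq1) (sub_nonneg.mpr hbB)]
      have hx0 : ((q:ℝ)+1)*b ≤ 0 := mul_nonpos_of_nonpos_of_nonneg hq1 hb0.le
      have hxx : b^2 * (1 + ((q:ℝ)+1)^2) ≤ b^2 + ((q:ℝ)*B + (r:ℕ))^2 := by
        nlinarith [sq_nonneg ((q:ℝ)*B + (r:ℕ) - ((q:ℝ)+1)*b),
          mul_nonneg (neg_nonneg.mpr (add_nonpos (hx1.trans hx0) hx0))
            (sub_nonneg.mpr hx1)]
      calc (b^2 + ((q:ℝ)*B + (r:ℕ))^2) ^ (-t)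
          ≤ (b^2 * (1 + ((q:ℝ)+1)^2)) ^ (-t) :=
            Real.rpow_le_rpow_of_nonpos (by positivity) hxx (by linarith)
        _ = (b^2)^(-t) * ((1 + ((q:ℝ)+1)^2))^(-t) := Real.mul_rpow (by positivity) (by positivity)
        _ ≤ M (q, r) := by
            rw [hMdef]
            refine mul_le_mul_of_nonneg_left ?_ (Real.rpow_nonneg (by positivity) _)
            exact le_add_of_nonneg_left (Real.rpow_nonneg (by positivity) _)
  -- put it together
  have hMtsum : ∑' p, M p = (B:ℝ) * ((b^2)^(-t) * (2*G)) := by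
    rw [hMdef, Summable.tsum_prod' hMsum (fun q => Summable.of_finite)]
    have inner : ∀ q : ℤ, ∑' _ : Fin B, (b^2)^(-t) * g q = (B:ℝ) * ((b^2)^(-t) * g q) := by
      intro q
      rw [tsum_fintype]
      simp [Finset.sum_const, nsmul_eq_mul]
    calc ∑' q : ℤ, ∑' _ : Fin B, (b^2)^(-t) * g q
        = ∑' q : ℤ, (B:ℝ) * ((b^2)^(-t) * g q) := tsum_congr inner
      _ = (B:ℝ) * ∑' q : ℤ, (b^2)^(-t) * g q := tsum_mul_left
      _ = (B:ℝ) * ((b^2)^(-t) * ∑' q, g q) := by rw [tsum_mul_left]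
      _ = (B:ℝ) * ((b^2)^(-t) * (2*G)) := by rw [hgtsum]
  have step : ∑' i : ℤ, (b^2 + (i:ℝ)^2) ^ (-t) ≤ (B:ℝ) * ((b^2)^(-t) * (2*G)) := by
    rw [← Equiv.tsum_eq (Int.divModEquiv B).symm (fun i : ℤ => (b^2 + (i:ℝ)^2) ^ (-t))]
    rw [← hMtsum]
    exact Summable.tsum_le_tsum key ((Int.divModEquiv B).symm.summable_iff.mpr hsum) hMsum
  have hbpow : b * (b^2)^(-t) = (b^2) ^ ((1:ℝ)/2 - t) := by
    have h2 : (b^2 : ℝ) = b ^ (2:ℝ) := by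
      rw [← Real.rpow_natCast b 2]; norm_num
    rw [h2, ← Real.rpow_mul hb0.le, ← Real.rpow_mul hb0.le]
    rw [show (2:ℝ) * ((1:ℝ)/2 - t) = 1 + 2*(-t) by ring, Real.rpow_add hb0]
    rw [Real.rpow_one]
  have hGpos : (0:ℝ) < G := by linarith
  have hrp : (0:ℝ) ≤ (b^2)^(-t) := Real.rpow_nonneg (by positivity) _
  calc ∑' i : ℤ, (b^2 + (i:ℝ)^2) ^ (-t) ≤ (B:ℝ) * ((b^2)^(-t) * (2*G)) := step
    _ ≤ (2*b) * ((b^2)^(-t) * (2*G)) := by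
        refine mul_le_mul_of_nonneg_right hBle (by positivity)
    _ = 4*G * (b * (b^2)^(-t)) := by ring
    _ = 4*G * (b^2) ^ ((1:ℝ)/2 - t) := by rw [hbpow]

lemma int_one_le_sq {n : ℤ} (hn : n ≠ 0) : (1:ℝ) ≤ (n:ℝ)^2 := by
  have h := Int.one_le_abs hn
  have h2 : (1:ℤ) ≤ n^2 := by nlinarith [sq_abs n]
  exact_mod_cast h2

/-- For `s > 3/2` the family `((a²+i²+j²+k²)^{-s})_{(i,j,k) ∈ ℤ³ \ {0}}` is summable, with
`∑'_{(i,j,k) ≠ 0} (a²+i²+j²+k²)^{-s} ≤ C_s/(a²+1)^{s-3/2}` for a constant `C_s > 0`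
independent of `a`. In particular, the alternating series
`∑'_{(i,j,k) ≠ 0} (-1)^{i+j+k} (a²+i²+j²+k²)^{-s}` converges absolutely and its sum tends to
`0` as `a → ∞`. -/
theorem lattice_sum_summable_of_gt (s : ℝ) (hs : 3 / 2 < s) :
    ∃ C > 0,
      (∀ a : ℝ,
        Summable (fun p : {p : ℤ × ℤ × ℤ // p ≠ 0} =>
          (a ^ 2 + ((p : ℤ × ℤ × ℤ).1 : ℝ) ^ 2 + ((p : ℤ × ℤ × ℤ).2.1 : ℝ) ^ 2 +
            ((p : ℤ × ℤ × ℤ).2.2 : ℝ) ^ 2) ^ (-s)) ∧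
        (∑' p : {p : ℤ × ℤ × ℤ // p ≠ 0},
          (a ^ 2 + ((p : ℤ × ℤ × ℤ).1 : ℝ) ^ 2 + ((p : ℤ × ℤ × ℤ).2.1 : ℝ) ^ 2 +
            ((p : ℤ × ℤ × ℤ).2.2 : ℝ) ^ 2) ^ (-s)) ≤ C / (a ^ 2 + 1) ^ (s - 3 / 2)) ∧
      (∀ a : ℝ,
        Summable (fun p : {p : ℤ × ℤ × ℤ // p ≠ 0} =>
          |(-1 : ℝ) ^ ((p : ℤ × ℤ × ℤ).1 + (p : ℤ × ℤ × ℤ).2.1 + (p : ℤ × ℤ × ℤ).2.2) *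
            (a ^ 2 + ((p : ℤ × ℤ × ℤ).1 : ℝ) ^ 2 + ((p : ℤ × ℤ × ℤ).2.1 : ℝ) ^ 2 +
              ((p : ℤ × ℤ × ℤ).2.2 : ℝ) ^ 2) ^ (-s)|)) ∧
      Filter.Tendsto (fun a : ℝ =>
          ∑' p : {p : ℤ × ℤ × ℤ // p ≠ 0},
            (-1 : ℝ) ^ ((p : ℤ × ℤ × ℤ).1 + (p : ℤ × ℤ × ℤ).2.1 + (p : ℤ × ℤ × ℤ).2.2) *
              (a ^ 2 + ((p : ℤ × ℤ × ℤ).1 : ℝ) ^ 2 + ((p : ℤ × ℤ × ℤ).2.1 : ℝ) ^ 2 +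
                ((p : ℤ × ℤ × ℤ).2.2 : ℝ) ^ 2) ^ (-s))
        Filter.atTop (nhds 0) := by
  have ht : 1/2 < s/3 := by linarith
  obtain ⟨D, hD, hDall⟩ := oneD ht
  set C : ℝ := 2^s * D^3 with hCdef
  have hC : 0 < C := by positivity
  -- master statement
  have master : ∀ a : ℝ,
      Summable (fun p : {p : ℤ × ℤ × ℤ // p ≠ 0} =>
        (a ^ 2 + ((p : ℤ × ℤ × ℤ).1 : ℝ) ^ 2 + ((p : ℤ × ℤ × ℤ).2.1 : ℝ) ^ 2 +
          ((p : ℤ × ℤ × ℤ).2.2 : ℝ) ^ 2) ^ (-s)) ∧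
      (∑' p : {p : ℤ × ℤ × ℤ // p ≠ 0},
        (a ^ 2 + ((p : ℤ × ℤ × ℤ).1 : ℝ) ^ 2 + ((p : ℤ × ℤ × ℤ).2.1 : ℝ) ^ 2 +
          ((p : ℤ × ℤ × ℤ).2.2 : ℝ) ^ 2) ^ (-s)) ≤ C / (a ^ 2 + 1) ^ (s - 3 / 2) := by
    intro a
    set b : ℝ := Real.sqrt (a^2 + 1) with hbdef
    have hb2 : b^2 = a^2 + 1 := Real.sq_sqrt (by positivity)
    have hb0 : 0 ≤ b := Real.sqrt_nonneg _
    have hb : 1 ≤ b := by nlinarith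
    obtain ⟨hu, hU⟩ := hDall b hb
    set u : ℤ → ℝ := fun i => (b^2 + (i:ℝ)^2) ^ (-(s/3)) with hudef
    have hunn : ∀ i, 0 ≤ u i := fun i => Real.rpow_nonneg (by positivity) _
    have hw : Summable (fun y : ℤ × ℤ => u y.1 * u y.2) :=
      hu.mul_of_nonneg hu hunn hunn
    have hwnn : ∀ y : ℤ × ℤ, 0 ≤ u y.1 * u y.2 := fun y => mul_nonneg (hunn _) (hunn _)
    have hF : Summable (fun p : ℤ × ℤ × ℤ => u p.1 * (u p.2.1 * u p.2.2)) :=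
      hu.mul_of_nonneg hw hunn hwnn
    have hF2 : Summable (fun p : ℤ × ℤ × ℤ => 2^s * (u p.1 * (u p.2.1 * u p.2.2))) :=
      hF.mul_left _
    have hF2nn : ∀ p : ℤ × ℤ × ℤ, 0 ≤ 2^s * (u p.1 * (u p.2.1 * u p.2.2)) :=
      fun p => by positivity
    -- pointwise bound
    have key : ∀ p : ℤ × ℤ × ℤ, p ≠ 0 →
        (a ^ 2 + (p.1 : ℝ) ^ 2 + (p.2.1 : ℝ) ^ 2 + (p.2.2 : ℝ) ^ 2) ^ (-s) ≤
          2^s * (u p.1 * (u p.2.1 * u p.2.2)) := by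
      rintro ⟨i, j, k⟩ hp
      have hone : (1:ℝ) ≤ (i:ℝ)^2 + (j:ℝ)^2 + (k:ℝ)^2 := by
        have : i ≠ 0 ∨ j ≠ 0 ∨ k ≠ 0 := by
          by_contra h
          push_neg at h
          exact hp (by simp [Prod.ext_iff, h.1, h.2.1, h.2.2])
        rcases this with h | h | h
        · have := int_one_le_sq h
          nlinarith [sq_nonneg ((j:ℝ)), sq_nonneg ((k:ℝ))]
        · have := int_one_le_sq h
          nlinarith [sq_nonneg ((i:ℝ)), sq_nonneg ((k:ℝ))]
        · have := int_one_le_sq h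
          nlinarith [sq_nonneg ((i:ℝ)), sq_nonneg ((j:ℝ))]
      set X : ℝ := (i:ℝ)^2 + (j:ℝ)^2 + (k:ℝ)^2 with hXdef
      have hXpos : (0:ℝ) < X := by linarith
      have hstepA : (a ^ 2 + (i:ℝ)^2 + (j:ℝ)^2 + (k:ℝ)^2) ^ (-s) ≤
          ((b^2 + X)/2) ^ (-s) := by
        apply Real.rpow_le_rpow_of_nonpos (by positivity) (by rw [hb2]; nlinarith [sq_nonneg a, hone, hXdef])
          (by linarith)
      have hstepB : ((b^2 + X)/2) ^ (-s) = 2^s * (b^2 + X) ^ (-s) := by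
        rw [Real.div_rpow (by positivity) (by norm_num), Real.rpow_neg (by norm_num : (0:ℝ) ≤ 2)]
        field_simp
      have hx1 : (0:ℝ) < b^2 + (i:ℝ)^2 := by nlinarith
      have hx2 : (0:ℝ) < b^2 + (j:ℝ)^2 := by nlinarith
      have hx3 : (0:ℝ) < b^2 + (k:ℝ)^2 := by nlinarith
      have hAM : (b^2 + (i:ℝ)^2)^((1:ℝ)/3) * (b^2 + (j:ℝ)^2)^((1:ℝ)/3) *
          (b^2 + (k:ℝ)^2)^((1:ℝ)/3) ≤ b^2 + X := by
        have := Real.geom_mean_le_arith_mean3_weighted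
          (by norm_num : (0:ℝ) ≤ 1/3) (by norm_num : (0:ℝ) ≤ 1/3) (by norm_num : (0:ℝ) ≤ 1/3)
          hx1.le hx2.le hx3.le (by norm_num)
        calc (b^2 + (i:ℝ)^2)^((1:ℝ)/3) * (b^2 + (j:ℝ)^2)^((1:ℝ)/3) *
              (b^2 + (k:ℝ)^2)^((1:ℝ)/3)
            ≤ 1/3*(b^2 + (i:ℝ)^2) + 1/3*(b^2 + (j:ℝ)^2) + 1/3*(b^2 + (k:ℝ)^2) := this
          _ ≤ b^2 + X := by rw [hXdef]; nlinarith [sq_nonneg b]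
      have hPpos : (0:ℝ) < (b^2 + (i:ℝ)^2)^((1:ℝ)/3) * (b^2 + (j:ℝ)^2)^((1:ℝ)/3) *
          (b^2 + (k:ℝ)^2)^((1:ℝ)/3) := by
        have p1 := Real.rpow_pos_of_pos hx1 ((1:ℝ)/3)
        have p2 := Real.rpow_pos_of_pos hx2 ((1:ℝ)/3)
        have p3 := Real.rpow_pos_of_pos hx3 ((1:ℝ)/3)
        positivity
      have hthird : ∀ x : ℝ, 0 < x → (x^((1:ℝ)/3)) ^ (-s) = x ^ (-(s/3)) := by
        intro x hx
        rw [← Real.rpow_mul hx.le]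
        congr 1
        ring
      have hstepC : (b^2 + X) ^ (-s) ≤ u i * (u j * u k) := by
        calc (b^2 + X) ^ (-s)
            ≤ ((b^2 + (i:ℝ)^2)^((1:ℝ)/3) * (b^2 + (j:ℝ)^2)^((1:ℝ)/3) *
                (b^2 + (k:ℝ)^2)^((1:ℝ)/3)) ^ (-s) :=
              Real.rpow_le_rpow_of_nonpos hPpos hAM (by linarith)
          _ = ((b^2 + (i:ℝ)^2)^((1:ℝ)/3))^(-s) * ((b^2 + (j:ℝ)^2)^((1:ℝ)/3))^(-s) *
                ((b^2 + (k:ℝ)^2)^((1:ℝ)/3))^(-s) := by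
              rw [Real.mul_rpow (by positivity) (by positivity),
                Real.mul_rpow (by positivity) (by positivity)]
          _ = u i * (u j * u k) := by
              rw [hthird _ hx1, hthird _ hx2, hthird _ hx3, hudef]
              ring
      calc (a ^ 2 + (i:ℝ)^2 + (j:ℝ)^2 + (k:ℝ)^2) ^ (-s)
          ≤ ((b^2 + X)/2) ^ (-s) := hstepA
        _ = 2^s * (b^2 + X) ^ (-s) := hstepB
        _ ≤ 2^s * (u i * (u j * u k)) := by
            refine mul_le_mul_of_nonneg_left hstepC (by positivity)
    -- summability on the subtype
    have hsub : Summable (fun p : {p : ℤ × ℤ × ℤ // p ≠ 0} =>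
        2^s * (u (p : ℤ × ℤ × ℤ).1 * (u (p : ℤ × ℤ × ℤ).2.1 * u (p : ℤ × ℤ × ℤ).2.2))) :=
      hF2.subtype _
    have hsummable : Summable (fun p : {p : ℤ × ℤ × ℤ // p ≠ 0} =>
        (a ^ 2 + ((p : ℤ × ℤ × ℤ).1 : ℝ) ^ 2 + ((p : ℤ × ℤ × ℤ).2.1 : ℝ) ^ 2 +
          ((p : ℤ × ℤ × ℤ).2.2 : ℝ) ^ 2) ^ (-s)) := by
      refine hsub.of_nonneg_of_le (fun p => Real.rpow_nonneg ?_ _) (fun p => key p p.2)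
      have h1 := sq_nonneg a
      have h2 := sq_nonneg ((p : ℤ × ℤ × ℤ).1 : ℝ)
      have h3 := sq_nonneg ((p : ℤ × ℤ × ℤ).2.1 : ℝ)
      have h4 := sq_nonneg ((p : ℤ × ℤ × ℤ).2.2 : ℝ)
      linarith
    refine ⟨hsummable, ?_⟩
    -- tsum bound
    have hle : (∑' p : {p : ℤ × ℤ × ℤ // p ≠ 0},
        (a ^ 2 + ((p : ℤ × ℤ × ℤ).1 : ℝ) ^ 2 + ((p : ℤ × ℤ × ℤ).2.1 : ℝ) ^ 2 +
          ((p : ℤ × ℤ × ℤ).2.2 : ℝ) ^ 2) ^ (-s)) ≤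
        ∑' p : ℤ × ℤ × ℤ, 2^s * (u p.1 * (u p.2.1 * u p.2.2)) :=
      Summable.tsum_le_tsum_of_inj (Subtype.val) Subtype.val_injective (fun c _ => hF2nn c)
        (fun p => key p p.2) hsummable hF2
    set S : ℝ := ∑' i : ℤ, u i with hSdef
    have hS0 : 0 ≤ S := tsum_nonneg hunn
    have hFtsum : ∑' p : ℤ × ℤ × ℤ, 2^s * (u p.1 * (u p.2.1 * u p.2.2)) =
        2^s * (S * (S * S)) := by
      rw [tsum_mul_left]
      congr 1
      have hwt : ∑' y : ℤ × ℤ, u y.1 * u y.2 = S * S := by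
        rw [Summable.tsum_prod' hw (fun x => hu.mul_left (u x))]
        calc ∑' x : ℤ, ∑' y : ℤ, u x * u y = ∑' x : ℤ, u x * S := by
              refine tsum_congr fun x => ?_
              rw [tsum_mul_left]
          _ = S * S := by rw [tsum_mul_right]
      rw [Summable.tsum_prod' hF (fun x => hw.mul_left (u x))]
      calc ∑' x : ℤ, ∑' y : ℤ × ℤ, u x * (u y.1 * u y.2)
          = ∑' x : ℤ, u x * (S * S) := by
            refine tsum_congr fun x => ?_
            rw [tsum_mul_left, hwt]
        _ = S * (S * S) := by rw [tsum_mul_right]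
    set E : ℝ := D * (b^2) ^ ((1:ℝ)/2 - s/3) with hEdef
    have hE0 : 0 ≤ E := by positivity
    have hSE : S ≤ E := hU
    have hcube : S * (S * S) ≤ E * (E * E) := by
      have h1 : S * S ≤ E * E := mul_le_mul hSE hSE hS0 hE0
      exact mul_le_mul hSE h1 (mul_nonneg hS0 hS0) hE0
    have hEcube : E * (E * E) = D^3 * (b^2) ^ ((3:ℝ)/2 - s) := by
      rw [hEdef]
      have : ((b^2) ^ ((1:ℝ)/2 - s/3)) * (((b^2) ^ ((1:ℝ)/2 - s/3)) *
          ((b^2) ^ ((1:ℝ)/2 - s/3))) = (b^2) ^ ((3:ℝ)/2 - s) := by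
        rw [← Real.rpow_add (by positivity), ← Real.rpow_add (by positivity)]
        norm_num
        ring_nf
      calc D * (b^2) ^ ((1:ℝ)/2 - s/3) * (D * (b^2) ^ ((1:ℝ)/2 - s/3) *
            (D * (b^2) ^ ((1:ℝ)/2 - s/3)))
          = D^3 * (((b^2) ^ ((1:ℝ)/2 - s/3)) * (((b^2) ^ ((1:ℝ)/2 - s/3)) *
            ((b^2) ^ ((1:ℝ)/2 - s/3)))) := by ring
        _ = D^3 * (b^2) ^ ((3:ℝ)/2 - s) := by rw [this]
    have hfinal : 2^s * (E * (E * E)) = C / (a ^ 2 + 1) ^ (s - 3/2) := by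
      rw [hEcube, hb2, hCdef]
      rw [show (3:ℝ)/2 - s = -(s - 3/2) by ring, Real.rpow_neg (by positivity)]
      field_simp
    calc (∑' p : {p : ℤ × ℤ × ℤ // p ≠ 0},
          (a ^ 2 + ((p : ℤ × ℤ × ℤ).1 : ℝ) ^ 2 + ((p : ℤ × ℤ × ℤ).2.1 : ℝ) ^ 2 +
            ((p : ℤ × ℤ × ℤ).2.2 : ℝ) ^ 2) ^ (-s))
        ≤ ∑' p : ℤ × ℤ × ℤ, 2^s * (u p.1 * (u p.2.1 * u p.2.2)) := hle
      _ = 2^s * (S * (S * S)) := hFtsum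
      _ ≤ 2^s * (E * (E * E)) := mul_le_mul_of_nonneg_left hcube (by positivity)
      _ = C / (a ^ 2 + 1) ^ (s - 3/2) := hfinal
  -- absolute values
  have habs : ∀ (a : ℝ) (p : {p : ℤ × ℤ × ℤ // p ≠ 0}),
      |(-1 : ℝ) ^ ((p : ℤ × ℤ × ℤ).1 + (p : ℤ × ℤ × ℤ).2.1 + (p : ℤ × ℤ × ℤ).2.2) *
        (a ^ 2 + ((p : ℤ × ℤ × ℤ).1 : ℝ) ^ 2 + ((p : ℤ × ℤ × ℤ).2.1 : ℝ) ^ 2 +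
          ((p : ℤ × ℤ × ℤ).2.2 : ℝ) ^ 2) ^ (-s)| =
      (a ^ 2 + ((p : ℤ × ℤ × ℤ).1 : ℝ) ^ 2 + ((p : ℤ × ℤ × ℤ).2.1 : ℝ) ^ 2 +
          ((p : ℤ × ℤ × ℤ).2.2 : ℝ) ^ 2) ^ (-s) := by
    intro a p
    have hone : |(-1 : ℝ) ^ ((p : ℤ × ℤ × ℤ).1 + (p : ℤ × ℤ × ℤ).2.1 + (p : ℤ × ℤ × ℤ).2.2)| = 1 := by
      rw [← Real.norm_eq_abs]
      simp
    rw [abs_mul, hone, one_mul]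
    refine abs_of_nonneg (Real.rpow_nonneg ?_ _)
    have h2 := sq_nonneg ((p : ℤ × ℤ × ℤ).1 : ℝ)
    have h3 := sq_nonneg ((p : ℤ × ℤ × ℤ).2.1 : ℝ)
    have h4 := sq_nonneg ((p : ℤ × ℤ × ℤ).2.2 : ℝ)
    nlinarith [sq_nonneg a]
  have habs_summable : ∀ a : ℝ,
      Summable (fun p : {p : ℤ × ℤ × ℤ // p ≠ 0} =>
        |(-1 : ℝ) ^ ((p : ℤ × ℤ × ℤ).1 + (p : ℤ × ℤ × ℤ).2.1 + (p : ℤ × ℤ × ℤ).2.2) *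
          (a ^ 2 + ((p : ℤ × ℤ × ℤ).1 : ℝ) ^ 2 + ((p : ℤ × ℤ × ℤ).2.1 : ℝ) ^ 2 +
            ((p : ℤ × ℤ × ℤ).2.2 : ℝ) ^ 2) ^ (-s)|) :=
    fun a => ((master a).1).congr (fun p => (habs a p).symm)
  refine ⟨C, hC, fun a => master a, habs_summable, ?_⟩
  -- the limit
  have hbound : ∀ a : ℝ,
      ‖∑' p : {p : ℤ × ℤ × ℤ // p ≠ 0},
        (-1 : ℝ) ^ ((p : ℤ × ℤ × ℤ).1 + (p : ℤ × ℤ × ℤ).2.1 + (p : ℤ × ℤ × ℤ).2.2) *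
          (a ^ 2 + ((p : ℤ × ℤ × ℤ).1 : ℝ) ^ 2 + ((p : ℤ × ℤ × ℤ).2.1 : ℝ) ^ 2 +
            ((p : ℤ × ℤ × ℤ).2.2 : ℝ) ^ 2) ^ (-s)‖ ≤ C / (a ^ 2 + 1) ^ (s - 3/2) := by
    intro a
    have hnorm : Summable (fun p : {p : ℤ × ℤ × ℤ // p ≠ 0} =>
        ‖(-1 : ℝ) ^ ((p : ℤ × ℤ × ℤ).1 + (p : ℤ × ℤ × ℤ).2.1 + (p : ℤ × ℤ × ℤ).2.2) *
          (a ^ 2 + ((p : ℤ × ℤ × ℤ).1 : ℝ) ^ 2 + ((p : ℤ × ℤ × ℤ).2.1 : ℝ) ^ 2 +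
            ((p : ℤ × ℤ × ℤ).2.2 : ℝ) ^ 2) ^ (-s)‖) := by
      simpa only [Real.norm_eq_abs] using habs_summable a
    refine le_trans (norm_tsum_le_tsum_norm hnorm) ?_
    calc (∑' p : {p : ℤ × ℤ × ℤ // p ≠ 0},
          ‖(-1 : ℝ) ^ ((p : ℤ × ℤ × ℤ).1 + (p : ℤ × ℤ × ℤ).2.1 + (p : ℤ × ℤ × ℤ).2.2) *
            (a ^ 2 + ((p : ℤ × ℤ × ℤ).1 : ℝ) ^ 2 + ((p : ℤ × ℤ × ℤ).2.1 : ℝ) ^ 2 +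
              ((p : ℤ × ℤ × ℤ).2.2 : ℝ) ^ 2) ^ (-s)‖)
        = ∑' p : {p : ℤ × ℤ × ℤ // p ≠ 0},
            (a ^ 2 + ((p : ℤ × ℤ × ℤ).1 : ℝ) ^ 2 + ((p : ℤ × ℤ × ℤ).2.1 : ℝ) ^ 2 +
              ((p : ℤ × ℤ × ℤ).2.2 : ℝ) ^ 2) ^ (-s) := by
          refine tsum_congr fun p => ?_
          rw [Real.norm_eq_abs, habs a p]
      _ ≤ C / (a ^ 2 + 1) ^ (s - 3/2) := (master a).2
  have hg0 : Filter.Tendsto (fun a : ℝ => C / (a ^ 2 + 1) ^ (s - 3/2))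
      Filter.atTop (nhds 0) := by
    apply Filter.Tendsto.div_atTop (tendsto_const_nhds)
    apply (tendsto_rpow_atTop (by linarith : 0 < s - 3/2)).comp
    exact Filter.tendsto_atTop_add_const_right _ 1 (tendsto_pow_atTop two_ne_zero)
  exact squeeze_zero_norm hbound hg0
end

section
/- Let 0 < s ≤ 3/2 and a ∈ ℝ. There is a constant C_s > 0, independent of a and of I, J, K, such that for all integers I, J, K ≥ 1, |S_{Π_{I,J,K}}(a,s) - E_{Π_{I,J,K}}(a,s)| ≤ C_s / (a² + min{I², J², K²})^s. -/
open scoped BigOperators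

/-- `S_{Π_{I,J,K}}(a,s)`: the alternating lattice sum over the nonzero integer points of the
rectangle `Π_{I,J,K} = [-I,I] × [-J,J] × [-K,K]`. -/
noncomputable def Spi (a s : ℝ) (I J K : ℕ) : ℝ :=
  ∑ p ∈ ((Finset.Icc (-(I : ℤ)) (I : ℤ)) ×ˢ (Finset.Icc (-(J : ℤ)) (J : ℤ)) ×ˢ
      (Finset.Icc (-(K : ℤ)) (K : ℤ))).filter (fun p : ℤ × ℤ × ℤ => p ≠ 0),
    (-1 : ℝ) ^ (p.1 + p.2.1 + p.2.2) *
      (a ^ 2 + (p.1 : ℝ) ^ 2 + (p.2.1 : ℝ) ^ 2 + (p.2.2 : ℝ) ^ 2) ^ (-s)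

/-- `E'_{I,J,K}(a,s)`: the alternating block sum over the 8 corners of the cube
`Q_{2I,2J,2K}`, with the term at the origin omitted. -/
noncomputable def Eblock (a s : ℝ) (I J K : ℤ) : ℝ :=
  ∑ i ∈ Finset.Icc (2 * I) (2 * I + 1), ∑ j ∈ Finset.Icc (2 * J) (2 * J + 1),
    ∑ k ∈ Finset.Icc (2 * K) (2 * K + 1),
      if (i, j, k) = ((0 : ℤ), (0 : ℤ), (0 : ℤ)) then 0
      else (-1 : ℝ) ^ (i + j + k) *
        (a ^ 2 + (i : ℝ) ^ 2 + (j : ℝ) ^ 2 + (k : ℝ) ^ 2) ^ (-s)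

/-- `E_{Π_{I,J,K}}(a,s)`: the sum of the block sums `E'_{i,j,k}(a,s)` over all `(i,j,k) ∈ ℤ³`
with `(2i,2j,2k) ∈ Π_{I,J,K}`. -/
noncomputable def EPi (a s : ℝ) (I J K : ℕ) : ℝ :=
  ∑ p ∈ ((Finset.Icc (-(I : ℤ)) (I : ℤ)) ×ˢ (Finset.Icc (-(J : ℤ)) (J : ℤ)) ×ˢ
      (Finset.Icc (-(K : ℤ)) (K : ℤ))).filter (fun p : ℤ × ℤ × ℤ =>
        -(I : ℤ) ≤ 2 * p.1 ∧ 2 * p.1 ≤ (I : ℤ) ∧ -(J : ℤ) ≤ 2 * p.2.1 ∧ 2 * p.2.1 ≤ (J : ℤ) ∧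
          -(K : ℤ) ≤ 2 * p.2.2 ∧ 2 * p.2.2 ≤ (K : ℤ)),
    Eblock a s p.1 p.2.1 p.2.2


section AuxiliaryLemmas
open Finset

private lemma neg_one_zpow_mul_self (n : ℤ) : (-1:ℝ)^n * (-1:ℝ)^n = 1 := by
  rw [← zpow_add₀ (by norm_num : (-1:ℝ) ≠ 0)]
  have h : n + n = 2 * n := by ring
  rw [h, zpow_mul]
  norm_num

private lemma abs_neg_one_zpow_aux (n : ℤ) : |(-1:ℝ)^n| = 1 := by
  rcases mul_self_eq_one_iff.mp (neg_one_zpow_mul_self n) with h | h <;> rw [h] <;> norm_num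

private lemma neg_one_zpow_neg (n : ℤ) : (-1:ℝ)^(-n) = (-1:ℝ)^n := by
  rw [zpow_neg, inv_eq_of_mul_eq_one_left (neg_one_zpow_mul_self n)]

private lemma alt1d (h : ℤ → ℝ) (p q : ℤ)
    (h0 : ∀ x, p ≤ x → 0 ≤ h x) (hm : ∀ x, p ≤ x → h (x+1) ≤ h x) :
    0 ≤ (-1:ℝ)^p * ∑ x ∈ Finset.Icc p q, (-1:ℝ)^x * h x ∧
      (-1:ℝ)^p * ∑ x ∈ Finset.Icc p q, (-1:ℝ)^x * h x ≤ h p := by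
  by_cases hpq : p ≤ q
  · obtain ⟨n, rfl⟩ : ∃ n : ℕ, q = p + n := ⟨(q - p).toNat, by omega⟩
    clear hpq
    induction n generalizing p with
    | zero =>
      have hI : Finset.Icc p (p + ((0:ℕ):ℤ)) = {p} := by
        norm_num
      rw [hI, Finset.sum_singleton, ← mul_assoc, neg_one_zpow_mul_self, one_mul]
      exact ⟨h0 p le_rfl, le_rfl⟩
    | succ n ih =>
      have hI : Finset.Icc p (p + ((n+1:ℕ):ℤ)) = insert p (Finset.Icc (p+1) (p+1+(n:ℕ))) := by
        ext x
        simp only [Finset.mem_Icc, Finset.mem_insert]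
        omega
      have hnot : p ∉ Finset.Icc (p+1) (p+1+(n:ℕ)) := by
        simp only [Finset.mem_Icc]; omega
      rw [hI, Finset.sum_insert hnot]
      obtain ⟨ih1, ih2⟩ := ih (p+1) (fun x hx => h0 x (by omega)) (fun x hx => hm x (by omega))
      have e1 : (-1:ℝ)^(p+1) = -((-1:ℝ)^p) := by
        rw [zpow_add₀ (by norm_num : (-1:ℝ) ≠ 0)]; ring
      rw [e1] at ih1 ih2
      have htt := neg_one_zpow_mul_self p
      have hmono := hm p le_rfl
      set S := ∑ x ∈ Finset.Icc (p+1) (p+1+(n:ℕ)), (-1:ℝ)^x * h x with hS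
      constructor <;> nlinarith [h0 p le_rfl, h0 (p+1) (by omega : p ≤ p + 1)]
  · rw [Finset.Icc_eq_empty (by omega)]
    simp only [Finset.sum_empty, mul_zero]
    exact ⟨le_rfl, h0 p le_rfl⟩

private lemma alt1d_abs (h : ℤ → ℝ) (p q : ℤ)
    (h0 : ∀ x, p ≤ x → 0 ≤ h x) (hm : ∀ x, p ≤ x → h (x+1) ≤ h x) :
    |∑ x ∈ Finset.Icc p q, (-1:ℝ)^x * h x| ≤ h p := by
  obtain ⟨l, u⟩ := alt1d h p q h0 hm
  calc |∑ x ∈ Finset.Icc p q, (-1:ℝ)^x * h x|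
      = |(-1:ℝ)^p * ∑ x ∈ Finset.Icc p q, (-1:ℝ)^x * h x| := by
        rw [abs_mul, abs_neg_one_zpow_aux, one_mul]
    _ ≤ h p := abs_le.mpr ⟨by linarith [h0 p le_rfl], u⟩

private lemma alt2d (φ : ℤ → ℤ → ℝ) (p q r t : ℤ)
    (h0 : ∀ x y, p ≤ x → r ≤ y → 0 ≤ φ x y)
    (hmy : ∀ x y, p ≤ x → r ≤ y → φ x (y+1) ≤ φ x y)
    (hmx : ∀ x y, p ≤ x → r ≤ y → φ (x+1) y ≤ φ x y)
    (hmix : ∀ x y, p ≤ x → r ≤ y → φ (x+1) y - φ (x+1) (y+1) ≤ φ x y - φ x (y+1)) :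
    |∑ x ∈ Finset.Icc p q, ∑ y ∈ Finset.Icc r t, (-1:ℝ)^x * ((-1:ℝ)^y * φ x y)| ≤ φ p r := by
  set ψ : ℤ → ℝ := fun x => (-1:ℝ)^r * ∑ y ∈ Finset.Icc r t, (-1:ℝ)^y * φ x y with hψdef
  have hψ0 : ∀ x, p ≤ x → 0 ≤ ψ x ∧ ψ x ≤ φ x r := fun x hx =>
    alt1d (φ x) r t (fun y hy => h0 x y hx hy) (fun y hy => hmy x y hx hy)
  have hψm : ∀ x, p ≤ x → ψ (x+1) ≤ ψ x := by
    intro x hx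
    have hlow := (alt1d (fun y => φ x y - φ (x+1) y) r t
      (fun y hy => sub_nonneg.mpr (hmx x y hx hy))
      (fun y hy => by have := hmix x y hx hy; linarith)).1
    have hsum : ∑ y ∈ Finset.Icc r t, (-1:ℝ)^y * (φ x y - φ (x+1) y)
        = (∑ y ∈ Finset.Icc r t, (-1:ℝ)^y * φ x y)
          - ∑ y ∈ Finset.Icc r t, (-1:ℝ)^y * φ (x+1) y := by
      rw [← Finset.sum_sub_distrib]
      exact Finset.sum_congr rfl fun y _ => by ring
    rw [hsum] at hlow
    have : ψ x - ψ (x+1) = (-1:ℝ)^r * ((∑ y ∈ Finset.Icc r t, (-1:ℝ)^y * φ x y)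
        - ∑ y ∈ Finset.Icc r t, (-1:ℝ)^y * φ (x+1) y) := by
      simp only [hψdef]; ring
    linarith
  have key : ∑ x ∈ Finset.Icc p q, ∑ y ∈ Finset.Icc r t, (-1:ℝ)^x * ((-1:ℝ)^y * φ x y)
      = (-1:ℝ)^r * ∑ x ∈ Finset.Icc p q, (-1:ℝ)^x * ψ x := by
    rw [Finset.mul_sum]
    refine Finset.sum_congr rfl fun x _ => ?_
    rw [← Finset.mul_sum]
    simp only [hψdef]
    rw [show (-1:ℝ)^r * ((-1:ℝ)^x * ((-1:ℝ)^r * ∑ y ∈ Finset.Icc r t, (-1:ℝ)^y * φ x y))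
        = ((-1:ℝ)^r * (-1:ℝ)^r) * ((-1:ℝ)^x * ∑ y ∈ Finset.Icc r t, (-1:ℝ)^y * φ x y) from by
      ring, neg_one_zpow_mul_self, one_mul]
  rw [key, abs_mul, abs_neg_one_zpow_aux, one_mul]
  exact (alt1d_abs ψ p q (fun x hx => (hψ0 x hx).1) hψm).trans (hψ0 p le_rfl).2

private lemma mix (c s : ℝ) (hc : 0 < c) (hs : 0 ≤ s) {u u' v v' : ℝ}
    (hu : 0 ≤ u) (huu : u ≤ u') (hv : 0 ≤ v) (hvv : v ≤ v') :
    (c+u+v') ^ (-s) + (c+u'+v) ^ (-s) ≤ (c+u+v) ^ (-s) + (c+u'+v') ^ (-s) := by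
  have hpos : ∀ w : ℝ, 0 ≤ w → (0:ℝ) < c + u + w := fun w hw => by linarith
  have hpos' : ∀ w : ℝ, 0 ≤ w → (0:ℝ) < c + u' + w := fun w hw => by linarith
  have hG : AntitoneOn (fun w => (c+u+w) ^ (-s) - (c+u'+w) ^ (-s)) (Set.Ici 0) := by
    have hder : ∀ w : ℝ, 0 < w → HasDerivAt (fun w => (c+u+w) ^ (-s) - (c+u'+w) ^ (-s))
        ((1 * (-s) * (c+u+w) ^ (-s-1)) - (1 * (-s) * (c+u'+w) ^ (-s-1))) w := by
      intro w hw
      have h1 : HasDerivAt (fun w : ℝ => c + u + w) 1 w := (hasDerivAt_id w).const_add (c+u)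
      have h2 : HasDerivAt (fun w : ℝ => c + u' + w) 1 w := (hasDerivAt_id w).const_add (c+u')
      exact (h1.rpow_const (Or.inl (hpos w hw.le).ne')).sub
        (h2.rpow_const (Or.inl (hpos' w hw.le).ne'))
    apply antitoneOn_of_deriv_nonpos (convex_Ici 0)
    · apply ContinuousOn.sub
      · exact ContinuousOn.rpow_const (by fun_prop) (fun w hw => Or.inl (hpos w hw).ne')
      · exact ContinuousOn.rpow_const (by fun_prop) (fun w hw => Or.inl (hpos' w hw).ne')
    · intro w hw
      rw [interior_Ici] at hw
      exact ((hder w hw).differentiableAt).differentiableWithinAt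
    · intro w hw
      rw [interior_Ici] at hw
      rw [(hder w hw).deriv]
      have hle : (c+u'+w) ^ (-s-1) ≤ (c+u+w) ^ (-s-1) :=
        Real.rpow_le_rpow_of_nonpos (hpos w hw.le) (by linarith) (by linarith)
      nlinarith
  have := hG (Set.mem_Ici.mpr hv) (Set.mem_Ici.mpr (hv.trans hvv)) hvv
  dsimp only at this
  linarith

private lemma quad (c s : ℝ) (hc : 0 < c) (hs : 0 ≤ s) (p q r t : ℤ) (hp : 0 ≤ p) (hr : 0 ≤ r) :
    |∑ x ∈ Finset.Icc p q, ∑ y ∈ Finset.Icc r t,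
        (-1:ℝ)^x * ((-1:ℝ)^y * (c + (x:ℝ)^2 + (y:ℝ)^2) ^ (-s))| ≤ c ^ (-s) := by
  have hbase : ∀ x y : ℤ, (0:ℝ) < c + (x:ℝ)^2 + (y:ℝ)^2 := fun x y => by positivity
  have key := alt2d (fun x y => (c + (x:ℝ)^2 + (y:ℝ)^2) ^ (-s)) p q r t
    (fun x y _ _ => Real.rpow_nonneg (hbase x y).le _)
    (fun x y hx hy => by
      have hy0 : (0:ℝ) ≤ (y:ℝ) := by exact_mod_cast hr.trans hy
      apply Real.rpow_le_rpow_of_nonpos (hbase x y) ?_ (by linarith)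
      push_cast; nlinarith)
    (fun x y hx hy => by
      have hx0 : (0:ℝ) ≤ (x:ℝ) := by exact_mod_cast hp.trans hx
      apply Real.rpow_le_rpow_of_nonpos (hbase x y) ?_ (by linarith)
      push_cast; nlinarith)
    (fun x y hx hy => by
      have hx0 : (0:ℝ) ≤ (x:ℝ) := by exact_mod_cast hp.trans hx
      have hy0 : (0:ℝ) ≤ (y:ℝ) := by exact_mod_cast hr.trans hy
      have := mix c s hc hs (u := (x:ℝ)^2) (u' := ((x:ℝ)+1)^2) (v := (y:ℝ)^2)
        (v' := ((y:ℝ)+1)^2) (by positivity) (by nlinarith) (by positivity) (by nlinarith)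
      push_cast
      linarith)
  refine key.trans ?_
  apply Real.rpow_le_rpow_of_nonpos hc ?_ (by linarith)
  have hp0 : (0:ℝ) ≤ (p:ℝ) := by exact_mod_cast hp
  have hr0 : (0:ℝ) ≤ (r:ℝ) := by exact_mod_cast hr
  nlinarith

private lemma split_sum (u v : ℤ) (f : ℤ → ℝ) :
    ∑ x ∈ Finset.Icc u v, f x
      = (∑ x ∈ Finset.Icc u (min v (-1)), f x) + ∑ x ∈ Finset.Icc (max u 0) v, f x := by
  rw [← Finset.sum_union (by
    rw [Finset.disjoint_left]
    intro x h1 h2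
    simp only [Finset.mem_Icc] at h1 h2
    omega)]
  congr 1
  ext x
  simp only [Finset.mem_Icc, Finset.mem_union]
  omega

private lemma sum_reflect (u v : ℤ) (f : ℤ → ℝ) :
    ∑ x ∈ Finset.Icc u v, f x = ∑ x ∈ Finset.Icc (-v) (-u), f (-x) := by
  apply Finset.sum_nbij' (i := fun x => -x) (j := fun x => -x) <;>
    intro x hx <;> simp only [Finset.mem_Icc, neg_neg] at * <;> omega

private lemma alt2d_rect (c s : ℝ) (hc : 0 < c) (hs : 0 ≤ s) (u v w z : ℤ) :
    |∑ x ∈ Finset.Icc u v, ∑ y ∈ Finset.Icc w z,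
        (-1:ℝ)^x * ((-1:ℝ)^y * (c + (x:ℝ)^2 + (y:ℝ)^2) ^ (-s))| ≤ 4 * c ^ (-s) := by
  set g : ℤ → ℤ → ℝ := fun x y => (-1:ℝ)^x * ((-1:ℝ)^y * (c + (x:ℝ)^2 + (y:ℝ)^2) ^ (-s))
    with hg
  have hgx : ∀ x y : ℤ, g (-x) y = g x y := by
    intro x y
    simp only [hg, neg_one_zpow_neg, Int.cast_neg, neg_sq]
  have hgy : ∀ x y : ℤ, g x (-y) = g x y := by
    intro x y
    simp only [hg, neg_one_zpow_neg, Int.cast_neg, neg_sq]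
  -- bound on a quadrant-type rectangle where we might need reflections
  have hpiece : ∀ p q r t : ℤ, 0 ≤ p → 0 ≤ r →
      |∑ x ∈ Finset.Icc p q, ∑ y ∈ Finset.Icc r t, g x y| ≤ c ^ (-s) :=
    fun p q r t hp hr => quad c s hc hs p q r t hp hr
  have hpiece2 : ∀ p q r t : ℤ, 0 ≤ p → t ≤ -1 →
      |∑ x ∈ Finset.Icc p q, ∑ y ∈ Finset.Icc r t, g x y| ≤ c ^ (-s) := by
    intro p q r t hp ht
    have : ∀ x : ℤ, ∑ y ∈ Finset.Icc r t, g x y = ∑ y ∈ Finset.Icc (-t) (-r), g x (-y) := by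
      intro x; exact sum_reflect r t (g x)
    simp only [this, hgy]
    exact hpiece p q (-t) (-r) hp (by omega)
  have hpiece3 : ∀ p q r t : ℤ, q ≤ -1 → 0 ≤ r →
      |∑ x ∈ Finset.Icc p q, ∑ y ∈ Finset.Icc r t, g x y| ≤ c ^ (-s) := by
    intro p q r t hq hr
    rw [sum_reflect p q]
    simp only [hgx]
    exact hpiece (-q) (-p) r t (by omega) hr
  have hpiece4 : ∀ p q r t : ℤ, q ≤ -1 → t ≤ -1 →
      |∑ x ∈ Finset.Icc p q, ∑ y ∈ Finset.Icc r t, g x y| ≤ c ^ (-s) := by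
    intro p q r t hq ht
    rw [sum_reflect p q]
    simp only [hgx]
    exact hpiece2 (-q) (-p) r t (by omega) ht
  have expand : ∑ x ∈ Finset.Icc u v, ∑ y ∈ Finset.Icc w z, g x y
      = ((∑ x ∈ Finset.Icc u (min v (-1)), ∑ y ∈ Finset.Icc w (min z (-1)), g x y)
        + ∑ x ∈ Finset.Icc u (min v (-1)), ∑ y ∈ Finset.Icc (max w 0) z, g x y)
        + ((∑ x ∈ Finset.Icc (max u 0) v, ∑ y ∈ Finset.Icc w (min z (-1)), g x y)
        + ∑ x ∈ Finset.Icc (max u 0) v, ∑ y ∈ Finset.Icc (max w 0) z, g x y) := by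
    rw [split_sum u v]
    congr 1
    · rw [← Finset.sum_add_distrib]
      exact Finset.sum_congr rfl fun x _ => split_sum w z (g x)
    · rw [← Finset.sum_add_distrib]
      exact Finset.sum_congr rfl fun x _ => split_sum w z (g x)
  rw [expand]
  have b1 := hpiece4 u (min v (-1)) w (min z (-1)) (by omega) (by omega)
  have b2 := hpiece3 u (min v (-1)) (max w 0) z (by omega) (by omega)
  have b3 := hpiece2 (max u 0) v w (min z (-1)) (by omega) (by omega)
  have b4 := hpiece (max u 0) v (max w 0) z (by omega) (by omega)
  have h12 := abs_add_le (∑ x ∈ Finset.Icc u (min v (-1)), ∑ y ∈ Finset.Icc w (min z (-1)), g x y)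
    (∑ x ∈ Finset.Icc u (min v (-1)), ∑ y ∈ Finset.Icc (max w 0) z, g x y)
  have h34 := abs_add_le (∑ x ∈ Finset.Icc (max u 0) v, ∑ y ∈ Finset.Icc w (min z (-1)), g x y)
    (∑ x ∈ Finset.Icc (max u 0) v, ∑ y ∈ Finset.Icc (max w 0) z, g x y)
  have htot := abs_add_le ((∑ x ∈ Finset.Icc u (min v (-1)), ∑ y ∈ Finset.Icc w (min z (-1)), g x y)
        + ∑ x ∈ Finset.Icc u (min v (-1)), ∑ y ∈ Finset.Icc (max w 0) z, g x y)
    ((∑ x ∈ Finset.Icc (max u 0) v, ∑ y ∈ Finset.Icc w (min z (-1)), g x y)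
        + ∑ x ∈ Finset.Icc (max u 0) v, ∑ y ∈ Finset.Icc (max w 0) z, g x y)
  linarith

noncomputable def trm (a s : ℝ) (x y z : ℤ) : ℝ :=
  if x = 0 ∧ y = 0 ∧ z = 0 then 0
  else (-1:ℝ)^(x+y+z) * (a^2 + (x:ℝ)^2 + (y:ℝ)^2 + (z:ℝ)^2) ^ (-s)

noncomputable def AI (n : ℕ) : Finset ℤ := Finset.Icc (2 * -((n/2 : ℕ) : ℤ)) (2 * ((n/2 : ℕ) : ℤ) + 1)

private lemma sum_block (a b : ℤ) (u : ℤ → ℝ) :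
    ∑ i ∈ Finset.Icc a b, ∑ x ∈ Finset.Icc (2*i) (2*i+1), u x
      = ∑ x ∈ Finset.Icc (2*a) (2*b+1), u x := by
  rw [← Finset.sum_biUnion (by
    intro i hi j hj hij
    simp only [Function.onFun]
    rw [Finset.disjoint_left]
    intro x h1 h2
    simp only [Finset.mem_Icc] at h1 h2
    omega)]
  congr 1
  ext x
  simp only [Finset.mem_biUnion, Finset.mem_Icc]
  constructor
  · rintro ⟨i, hi, hx⟩; omega
  · intro hx; exact ⟨x / 2, by omega, by omega⟩

private lemma interval_diff (n : ℕ) (hn : 1 ≤ n) :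
    ∃ (ε : ℝ) (e : ℤ), |ε| = 1 ∧ (n:ℝ)^2 ≤ (e:ℝ)^2 ∧ e ≠ 0 ∧
      ∀ h : ℤ → ℝ, (∑ x ∈ Finset.Icc (-(n:ℤ)) n, h x) - (∑ x ∈ AI n, h x) = ε * h e := by
  rcases Nat.even_or_odd n with ⟨k, hk⟩ | ⟨k, hk⟩
  · -- n = 2k : AI n = Icc (-n) (n+1) = insert (n+1) (Icc (-n) n)
    refine ⟨-1, (n:ℤ)+1, by norm_num, ?_, by omega, ?_⟩
    · have : (1:ℝ) ≤ (n:ℝ) := by exact_mod_cast hn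
      push_cast
      nlinarith
    · intro h
      have hA : AI n = insert ((n:ℤ)+1) (Finset.Icc (-(n:ℤ)) n) := by
        unfold AI
        ext x
        simp only [Finset.mem_Icc, Finset.mem_insert]
        omega
      rw [hA, Finset.sum_insert (by simp only [Finset.mem_Icc]; omega)]
      ring
  · -- n = 2k+1 : Icc (-n) n = insert (-n) (AI n)
    refine ⟨1, -(n:ℤ), by norm_num, ?_, by omega, ?_⟩
    · push_cast; nlinarith
    · intro h
      have hB : Finset.Icc (-(n:ℤ)) n = insert (-(n:ℤ)) (AI n) := by
        unfold AI
        ext x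
        simp only [Finset.mem_Icc, Finset.mem_insert]
        omega
      rw [hB, Finset.sum_insert (by
        unfold AI
        simp only [Finset.mem_Icc]
        omega)]
      ring

private lemma Spi_eq (a s : ℝ) (I J K : ℕ) :
    Spi a s I J K = ∑ x ∈ Finset.Icc (-(I:ℤ)) I, ∑ y ∈ Finset.Icc (-(J:ℤ)) J,
      ∑ z ∈ Finset.Icc (-(K:ℤ)) K, trm a s x y z := by
  rw [Spi, Finset.sum_filter, Finset.sum_product]
  refine Finset.sum_congr rfl fun x _ => ?_
  rw [Finset.sum_product]
  refine Finset.sum_congr rfl fun y _ => Finset.sum_congr rfl fun z _ => ?_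
  rw [trm]
  simp only [Prod.ext_iff, Prod.fst, Prod.snd, ne_eq, Prod.mk_eq_zero]
  by_cases h : x = 0 ∧ y = 0 ∧ z = 0
  · simp [h]
  · simp [h]

private lemma Eblock_eq (a s : ℝ) (i j k : ℤ) :
    Eblock a s i j k = ∑ x ∈ Finset.Icc (2*i) (2*i+1), ∑ y ∈ Finset.Icc (2*j) (2*j+1),
      ∑ z ∈ Finset.Icc (2*k) (2*k+1), trm a s x y z := by
  rw [Eblock]
  refine Finset.sum_congr rfl fun x _ => Finset.sum_congr rfl fun y _ =>
    Finset.sum_congr rfl fun z _ => ?_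
  rw [trm]
  simp only [Prod.mk.injEq]

private lemma EPi_eq (a s : ℝ) (I J K : ℕ) :
    EPi a s I J K = ∑ x ∈ AI I, ∑ y ∈ AI J, ∑ z ∈ AI K, trm a s x y z := by
  rw [EPi]
  have hfilter : (((Finset.Icc (-(I : ℤ)) (I : ℤ)) ×ˢ (Finset.Icc (-(J : ℤ)) (J : ℤ)) ×ˢ
      (Finset.Icc (-(K : ℤ)) (K : ℤ))).filter (fun p : ℤ × ℤ × ℤ =>
        -(I : ℤ) ≤ 2 * p.1 ∧ 2 * p.1 ≤ (I : ℤ) ∧ -(J : ℤ) ≤ 2 * p.2.1 ∧ 2 * p.2.1 ≤ (J : ℤ) ∧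
          -(K : ℤ) ≤ 2 * p.2.2 ∧ 2 * p.2.2 ≤ (K : ℤ)))
      = (Finset.Icc (-((I/2 : ℕ) : ℤ)) ((I/2 : ℕ) : ℤ)) ×ˢ
        (Finset.Icc (-((J/2 : ℕ) : ℤ)) ((J/2 : ℕ) : ℤ)) ×ˢ
        (Finset.Icc (-((K/2 : ℕ) : ℤ)) ((K/2 : ℕ) : ℤ)) := by
    ext ⟨p1, p2, p3⟩
    simp only [Finset.mem_filter, Finset.mem_product, Finset.mem_Icc]
    omega
  rw [hfilter, Finset.sum_product]
  simp only [Finset.sum_product]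
  -- now : ∑ x1 ∑ x2 ∑ x3, Eblock a s x1 x2 x3
  calc ∑ x1 ∈ Finset.Icc (-((I/2:ℕ):ℤ)) ((I/2:ℕ):ℤ), ∑ x2 ∈ Finset.Icc (-((J/2:ℕ):ℤ)) ((J/2:ℕ):ℤ),
        ∑ x3 ∈ Finset.Icc (-((K/2:ℕ):ℤ)) ((K/2:ℕ):ℤ), Eblock a s x1 x2 x3
      = ∑ x1 ∈ Finset.Icc (-((I/2:ℕ):ℤ)) ((I/2:ℕ):ℤ), ∑ x2 ∈ Finset.Icc (-((J/2:ℕ):ℤ)) ((J/2:ℕ):ℤ),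
        ∑ y1 ∈ Finset.Icc (2*x1) (2*x1+1), ∑ y2 ∈ Finset.Icc (2*x2) (2*x2+1),
          ∑ z ∈ AI K, trm a s y1 y2 z := by
        refine Finset.sum_congr rfl fun x1 _ => Finset.sum_congr rfl fun x2 _ => ?_
        simp only [Eblock_eq]
        rw [Finset.sum_comm]
        refine Finset.sum_congr rfl fun y1 _ => ?_
        rw [Finset.sum_comm]
        refine Finset.sum_congr rfl fun y2 _ => ?_
        exact sum_block _ _ _
    _ = ∑ x1 ∈ Finset.Icc (-((I/2:ℕ):ℤ)) ((I/2:ℕ):ℤ), ∑ y1 ∈ Finset.Icc (2*x1) (2*x1+1),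
          ∑ y2 ∈ AI J, ∑ z ∈ AI K, trm a s y1 y2 z := by
        refine Finset.sum_congr rfl fun x1 _ => ?_
        rw [Finset.sum_comm]
        refine Finset.sum_congr rfl fun y1 _ => ?_
        exact sum_block _ _ _
    _ = ∑ x ∈ AI I, ∑ y ∈ AI J, ∑ z ∈ AI K, trm a s x y z := sum_block _ _ _

private lemma trm1 (a s : ℝ) (e : ℤ) (he : e ≠ 0) (x y : ℤ) :
    trm a s e x y
      = (-1:ℝ)^e * ((-1:ℝ)^x * ((-1:ℝ)^y * ((a^2 + (e:ℝ)^2) + (x:ℝ)^2 + (y:ℝ)^2) ^ (-s))) := by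
  rw [trm, if_neg (by tauto)]
  rw [zpow_add₀ (by norm_num : (-1:ℝ) ≠ 0), zpow_add₀ (by norm_num : (-1:ℝ) ≠ 0)]
  rw [show a^2 + (e:ℝ)^2 + (x:ℝ)^2 + (y:ℝ)^2 = (a^2 + (e:ℝ)^2) + (x:ℝ)^2 + (y:ℝ)^2 from by ring]
  ring

private lemma trm2 (a s : ℝ) (e : ℤ) (he : e ≠ 0) (x y : ℤ) :
    trm a s x e y
      = (-1:ℝ)^e * ((-1:ℝ)^x * ((-1:ℝ)^y * ((a^2 + (e:ℝ)^2) + (x:ℝ)^2 + (y:ℝ)^2) ^ (-s))) := by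
  rw [trm, if_neg (by tauto)]
  rw [show x + e + y = e + x + y from by ring]
  rw [zpow_add₀ (by norm_num : (-1:ℝ) ≠ 0), zpow_add₀ (by norm_num : (-1:ℝ) ≠ 0)]
  rw [show a^2 + (x:ℝ)^2 + (e:ℝ)^2 + (y:ℝ)^2 = (a^2 + (e:ℝ)^2) + (x:ℝ)^2 + (y:ℝ)^2 from by ring]
  ring

private lemma trm3 (a s : ℝ) (e : ℤ) (he : e ≠ 0) (x y : ℤ) :
    trm a s x y e
      = (-1:ℝ)^e * ((-1:ℝ)^x * ((-1:ℝ)^y * ((a^2 + (e:ℝ)^2) + (x:ℝ)^2 + (y:ℝ)^2) ^ (-s))) := by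
  rw [trm, if_neg (by tauto)]
  rw [show x + y + e = e + x + y from by ring]
  rw [zpow_add₀ (by norm_num : (-1:ℝ) ≠ 0), zpow_add₀ (by norm_num : (-1:ℝ) ≠ 0)]
  rw [show a^2 + (x:ℝ)^2 + (y:ℝ)^2 + (e:ℝ)^2 = (a^2 + (e:ℝ)^2) + (x:ℝ)^2 + (y:ℝ)^2 from by ring]
  ring

private lemma Wbnd (c s : ℝ) (hc : 0 < c) (hs : 0 ≤ s) (e : ℤ) (u v w z : ℤ) :
    |∑ x ∈ Finset.Icc u v, ∑ y ∈ Finset.Icc w z,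
        (-1:ℝ)^e * ((-1:ℝ)^x * ((-1:ℝ)^y * (c + (x:ℝ)^2 + (y:ℝ)^2) ^ (-s)))| ≤ 4 * c ^ (-s) := by
  have : ∑ x ∈ Finset.Icc u v, ∑ y ∈ Finset.Icc w z,
      (-1:ℝ)^e * ((-1:ℝ)^x * ((-1:ℝ)^y * (c + (x:ℝ)^2 + (y:ℝ)^2) ^ (-s)))
      = (-1:ℝ)^e * ∑ x ∈ Finset.Icc u v, ∑ y ∈ Finset.Icc w z,
        (-1:ℝ)^x * ((-1:ℝ)^y * (c + (x:ℝ)^2 + (y:ℝ)^2) ^ (-s)) := by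
    rw [Finset.mul_sum]
    exact Finset.sum_congr rfl fun x _ => by rw [Finset.mul_sum]
  rw [this, abs_mul, abs_neg_one_zpow_aux, one_mul]
  exact alt2d_rect c s hc hs u v w z

end AuxiliaryLemmas

/-- For `0 < s ≤ 3/2` there is `C_s > 0`, independent of `a` and `I, J, K`, such that
`|S_{Π_{I,J,K}}(a,s) - E_{Π_{I,J,K}}(a,s)| ≤ C_s/(a² + min{I²,J²,K²})^s`. -/
theorem abs_Spi_sub_EPi_le (s : ℝ) (hs0 : 0 < s) (hs : s ≤ 3 / 2) :
    ∃ C > 0, ∀ (a : ℝ) (I J K : ℕ), 1 ≤ I → 1 ≤ J → 1 ≤ K →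
      |Spi a s I J K - EPi a s I J K| ≤
        C / (a ^ 2 + min (min ((I : ℝ) ^ 2) ((J : ℝ) ^ 2)) ((K : ℝ) ^ 2)) ^ s := by
  refine ⟨12, by norm_num, ?_⟩
  intro a I J K hI hJ hK
  obtain ⟨ε1, e1, hε1, he1, he1z, hd1⟩ := interval_diff I hI
  obtain ⟨ε2, e2, hε2, he2, he2z, hd2⟩ := interval_diff J hJ
  obtain ⟨ε3, e3, hε3, he3, he3z, hd3⟩ := interval_diff K hK
  set m : ℝ := min (min ((I : ℝ) ^ 2) ((J : ℝ) ^ 2)) ((K : ℝ) ^ 2) with hm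
  have hI1 : (1:ℝ) ≤ (I:ℝ)^2 := by
    have : (1:ℝ) ≤ (I:ℝ) := by exact_mod_cast hI
    nlinarith
  have hJ1 : (1:ℝ) ≤ (J:ℝ)^2 := by
    have : (1:ℝ) ≤ (J:ℝ) := by exact_mod_cast hJ
    nlinarith
  have hK1 : (1:ℝ) ≤ (K:ℝ)^2 := by
    have : (1:ℝ) ≤ (K:ℝ) := by exact_mod_cast hK
    nlinarith
  have hm1 : 1 ≤ m := by simp only [hm, le_min_iff]; exact ⟨⟨hI1, hJ1⟩, hK1⟩
  have hMpos : 0 < a^2 + m := by nlinarith [sq_nonneg a]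
  -- the three slab sums
  set W1 : ℝ := ∑ x ∈ Finset.Icc (-(J:ℤ)) J, ∑ y ∈ Finset.Icc (-(K:ℤ)) K, trm a s e1 x y
    with hW1
  set W2 : ℝ := ∑ x ∈ AI I, ∑ y ∈ Finset.Icc (-(K:ℤ)) K, trm a s x e2 y with hW2
  set W3 : ℝ := ∑ x ∈ AI I, ∑ y ∈ AI J, trm a s x y e3 with hW3
  have key : Spi a s I J K - EPi a s I J K = ε1 * W1 + ε2 * W2 + ε3 * W3 := by
    rw [Spi_eq, EPi_eq]
    have t1 := hd1 (fun x => ∑ y ∈ Finset.Icc (-(J:ℤ)) J,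
      ∑ z ∈ Finset.Icc (-(K:ℤ)) K, trm a s x y z)
    have inner : ∀ x : ℤ,
        (∑ y ∈ Finset.Icc (-(J:ℤ)) J, ∑ z ∈ Finset.Icc (-(K:ℤ)) K, trm a s x y z)
          - (∑ y ∈ AI J, ∑ z ∈ AI K, trm a s x y z)
        = ε2 * (∑ z ∈ Finset.Icc (-(K:ℤ)) K, trm a s x e2 z)
          + ε3 * (∑ y ∈ AI J, trm a s x y e3) := by
      intro x
      have u1 := hd2 (fun y => ∑ z ∈ Finset.Icc (-(K:ℤ)) K, trm a s x y z)
      have u2 : (∑ y ∈ AI J, ∑ z ∈ Finset.Icc (-(K:ℤ)) K, trm a s x y z)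
          - (∑ y ∈ AI J, ∑ z ∈ AI K, trm a s x y z)
          = ε3 * ∑ y ∈ AI J, trm a s x y e3 := by
        rw [← Finset.sum_sub_distrib, Finset.mul_sum]
        exact Finset.sum_congr rfl fun y _ => hd3 (trm a s x y)
      linarith
    have expand : (∑ x ∈ AI I,
        ((∑ y ∈ Finset.Icc (-(J:ℤ)) J, ∑ z ∈ Finset.Icc (-(K:ℤ)) K, trm a s x y z)
          - (∑ y ∈ AI J, ∑ z ∈ AI K, trm a s x y z)))
        = ε2 * W2 + ε3 * W3 := by
      rw [hW2, hW3]
      calc ∑ x ∈ AI I,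
          ((∑ y ∈ Finset.Icc (-(J:ℤ)) J, ∑ z ∈ Finset.Icc (-(K:ℤ)) K, trm a s x y z)
            - (∑ y ∈ AI J, ∑ z ∈ AI K, trm a s x y z))
          = ∑ x ∈ AI I, (ε2 * (∑ z ∈ Finset.Icc (-(K:ℤ)) K, trm a s x e2 z)
            + ε3 * (∑ y ∈ AI J, trm a s x y e3)) :=
            Finset.sum_congr rfl fun x _ => inner x
        _ = _ := by
            rw [Finset.sum_add_distrib, ← Finset.mul_sum, ← Finset.mul_sum]
    have hsub : (∑ x ∈ AI I,
        (∑ y ∈ Finset.Icc (-(J:ℤ)) J, ∑ z ∈ Finset.Icc (-(K:ℤ)) K, trm a s x y z))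
        - (∑ x ∈ AI I, (∑ y ∈ AI J, ∑ z ∈ AI K, trm a s x y z))
        = ε2 * W2 + ε3 * W3 := by
      rw [← Finset.sum_sub_distrib]
      exact expand
    rw [hW1]
    linarith
  rw [key]
  -- bounds on the slabs
  have hbnd : ∀ (e : ℤ) (n : ℕ), (n:ℝ)^2 ≤ (e:ℝ)^2 → (1:ℝ) ≤ (n:ℝ)^2 → m ≤ (n:ℝ)^2 →
      (0 < a^2 + (e:ℝ)^2) ∧ (a^2 + (e:ℝ)^2) ^ (-s) ≤ (a^2 + m) ^ (-s) := by
    intro e n hne h1n hmn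
    have hpos : 0 < a^2 + (e:ℝ)^2 := by nlinarith [sq_nonneg a]
    exact ⟨hpos, Real.rpow_le_rpow_of_nonpos hMpos (by linarith) (by linarith)⟩
  have hmI : m ≤ (I:ℝ)^2 := le_trans (min_le_left _ _) (min_le_left _ _)
  have hmJ : m ≤ (J:ℝ)^2 := le_trans (min_le_left _ _) (min_le_right _ _)
  have hmK : m ≤ (K:ℝ)^2 := min_le_right _ _
  obtain ⟨hc1, hb1⟩ := hbnd e1 I he1 hI1 hmI
  obtain ⟨hc2, hb2⟩ := hbnd e2 J he2 hJ1 hmJ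
  obtain ⟨hc3, hb3⟩ := hbnd e3 K he3 hK1 hmK
  have bW1 : |W1| ≤ 4 * (a^2 + m) ^ (-s) := by
    have hrw : W1 = ∑ x ∈ Finset.Icc (-(J:ℤ)) J, ∑ y ∈ Finset.Icc (-(K:ℤ)) K,
        (-1:ℝ)^e1 * ((-1:ℝ)^x * ((-1:ℝ)^y * ((a^2 + (e1:ℝ)^2) + (x:ℝ)^2 + (y:ℝ)^2) ^ (-s))) := by
      rw [hW1]
      exact Finset.sum_congr rfl fun x _ => Finset.sum_congr rfl fun y _ => trm1 a s e1 he1z x y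
    rw [hrw]
    refine (Wbnd _ s hc1 hs0.le e1 _ _ _ _).trans ?_
    linarith
  have bW2 : |W2| ≤ 4 * (a^2 + m) ^ (-s) := by
    have hrw : W2 = ∑ x ∈ Finset.Icc (2 * -((I/2 : ℕ) : ℤ)) (2 * ((I/2 : ℕ) : ℤ) + 1),
        ∑ y ∈ Finset.Icc (-(K:ℤ)) K,
        (-1:ℝ)^e2 * ((-1:ℝ)^x * ((-1:ℝ)^y * ((a^2 + (e2:ℝ)^2) + (x:ℝ)^2 + (y:ℝ)^2) ^ (-s))) := by
      rw [hW2, AI]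
      exact Finset.sum_congr rfl fun x _ => Finset.sum_congr rfl fun y _ => trm2 a s e2 he2z x y
    rw [hrw]
    refine (Wbnd _ s hc2 hs0.le e2 _ _ _ _).trans ?_
    linarith
  have bW3 : |W3| ≤ 4 * (a^2 + m) ^ (-s) := by
    have hrw : W3 = ∑ x ∈ Finset.Icc (2 * -((I/2 : ℕ) : ℤ)) (2 * ((I/2 : ℕ) : ℤ) + 1),
        ∑ y ∈ Finset.Icc (2 * -((J/2 : ℕ) : ℤ)) (2 * ((J/2 : ℕ) : ℤ) + 1),
        (-1:ℝ)^e3 * ((-1:ℝ)^x * ((-1:ℝ)^y * ((a^2 + (e3:ℝ)^2) + (x:ℝ)^2 + (y:ℝ)^2) ^ (-s))) := by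
      rw [hW3, AI, AI]
      exact Finset.sum_congr rfl fun x _ => Finset.sum_congr rfl fun y _ => trm3 a s e3 he3z x y
    rw [hrw]
    refine (Wbnd _ s hc3 hs0.le e3 _ _ _ _).trans ?_
    linarith
  have habs : |ε1 * W1 + ε2 * W2 + ε3 * W3| ≤ |W1| + |W2| + |W3| := by
    calc |ε1 * W1 + ε2 * W2 + ε3 * W3| ≤ |ε1 * W1 + ε2 * W2| + |ε3 * W3| := abs_add_le _ _
      _ ≤ |ε1 * W1| + |ε2 * W2| + |ε3 * W3| := by linarith [abs_add_le (ε1 * W1) (ε2 * W2)]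
      _ = |W1| + |W2| + |W3| := by rw [abs_mul, abs_mul, abs_mul, hε1, hε2, hε3]; ring
  have hfin : (12:ℝ) * (a^2 + m) ^ (-s) = 12 / (a^2 + m) ^ s := by
    rw [Real.rpow_neg hMpos.le, div_eq_mul_inv]
  calc |ε1 * W1 + ε2 * W2 + ε3 * W3| ≤ |W1| + |W2| + |W3| := habs
    _ ≤ 12 * (a^2 + m) ^ (-s) := by linarith
    _ = 12 / (a^2 + m) ^ s := hfin
end
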